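/- arXiv:2103.10059 — 3 statements merged into one kernel-verified Lean document; each statement's English description precedes it below -/
import Mathlib

section
/- Let E be a complex separable Hilbert space and let (A_{m,n})_{m,n≥0} be bounded operators on E such that for all z,w in the open unit disc 𝔻 the double series κ(z,w) = Σ_{m,n≥0} A_{m,n} z^m·conj(w)^n converges absolutely in operator norm. Then κ is a positive semi-definite kernel (i.e., for every finite collection z_1,…,z_N ∈ 𝔻 and c_1,…,c_N ∈ E one has Σ_{i,j=1}^N ⟨κ(z_j, z_i)c_i, c_j⟩ ≥ 0) if and only if the family (A_{m,n})_{m,n≥0} is formally positive semi-definite (i.e., for every N ≥ 0 and all x_0,…,x_N ∈ E one has Σ_{m,n=0}^N ⟨A_{m,n} x_n, x_m⟩ ≥ 0). -/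
open scoped ComplexConjugate ComplexInnerProductSpace ComplexOrder
open Complex ContinuousLinearMap

noncomputable section

local notation "𝔻" => Metric.ball (0:ℂ) 1

/-! ### Auxiliary lemmas -/

section Aux

variable {E : Type*} [NormedAddCommGroup E] [InnerProductSpace ℂ E]

omit [NormedAddCommGroup E] [InnerProductSpace ℂ E] in
lemma zeta_pow_mod' {ζ : ℂ} {K : ℕ} (hprim : IsPrimitiveRoot ζ K) (a : ℕ) :
    ζ ^ a = ζ ^ (a % K) := by
  have hζ : ζ ^ K = 1 := hprim.pow_eq_one
  conv_lhs => rw [← Nat.div_add_mod a K]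
  rw [pow_add, pow_mul, hζ, one_pow, one_mul]

omit [NormedAddCommGroup E] [InnerProductSpace ℂ E] in
lemma conj_pow_unit' {ζ : ℂ} (habs : ‖ζ‖ = 1) (b : ℕ) :
    conj (ζ ^ b) = (ζ ^ b)⁻¹ := by
  have h : (ζ ^ b) * conj (ζ ^ b) = 1 := by
    rw [Complex.mul_conj]
    norm_cast
    rw [Complex.normSq_eq_norm_sq, norm_pow, habs]; simp
  exact eq_inv_of_mul_eq_one_right h

omit [NormedAddCommGroup E] [InnerProductSpace ℂ E] in
lemma root_sum' {ζ : ℂ} {K : ℕ} (hK : K ≠ 0) (hprim : IsPrimitiveRoot ζ K)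
    (habs : ‖ζ‖ = 1) (a b : ℕ) :
    ∑ j : Fin K, ζ ^ ((j : ℕ) * a) * conj (ζ ^ ((j : ℕ) * b)) =
      if a % K = b % K then (K : ℂ) else 0 := by
  have hζK : ζ ^ K = 1 := hprim.pow_eq_one
  have hζne : ζ ≠ 0 := by
    intro h; rw [h, zero_pow hK] at hζK; exact one_ne_zero hζK.symm
  have hbne : ζ ^ b ≠ 0 := pow_ne_zero _ hζne
  set η : ℂ := ζ ^ a * (ζ ^ b)⁻¹ with hηdef
  have hterm : ∀ j : Fin K, ζ ^ ((j : ℕ) * a) * conj (ζ ^ ((j : ℕ) * b)) = η ^ (j : ℕ) := by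
    intro j
    rw [conj_pow_unit' habs, hηdef, mul_pow, ← inv_pow ζ b, ← pow_mul, ← pow_mul,
      Nat.mul_comm a (j : ℕ), Nat.mul_comm b (j : ℕ), inv_pow]
  rw [Finset.sum_congr rfl (fun j _ => hterm j), Fin.sum_univ_eq_sum_range]
  have hζaK : (ζ ^ a) ^ K = 1 := by rw [← pow_mul, Nat.mul_comm, pow_mul, hζK, one_pow]
  have hζbK : (ζ ^ b) ^ K = 1 := by rw [← pow_mul, Nat.mul_comm, pow_mul, hζK, one_pow]
  have hηK : η ^ K = 1 := by
    rw [hηdef, mul_pow, inv_pow, hζaK, hζbK, inv_one, one_mul]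
  by_cases h : a % K = b % K
  · have hη1 : η = 1 := by
      rw [hηdef, mul_inv_eq_one₀ hbne, zeta_pow_mod' hprim a, zeta_pow_mod' hprim b, h]
    simp [hη1, h]
  · have hη1 : η ≠ 1 := by
      intro hcon
      apply h
      have heq : ζ ^ a = ζ ^ b := (mul_inv_eq_one₀ hbne).mp (hηdef ▸ hcon)
      rw [zeta_pow_mod' hprim a, zeta_pow_mod' hprim b] at heq
      exact hprim.pow_inj (Nat.mod_lt _ (Nat.pos_of_ne_zero hK))
        (Nat.mod_lt _ (Nat.pos_of_ne_zero hK)) heq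
    rw [geom_sum_eq hη1, hηK]
    simp [h]

omit [NormedAddCommGroup E] [InnerProductSpace ℂ E] in
lemma square_tendsto' :
    Filter.Tendsto (fun n : ℕ => Finset.range (n+1) ×ˢ Finset.range (n+1))
      Filter.atTop Filter.atTop := by
  apply Filter.tendsto_atTop_finset_of_monotone
  · intro a b hab
    exact Finset.product_subset_product (Finset.range_subset_range.2 (by omega))
      (Finset.range_subset_range.2 (by omega))
  · rintro ⟨a, b⟩
    exact ⟨max a b, Finset.mem_product.2 ⟨Finset.mem_range.2 (by omega),
      Finset.mem_range.2 (by omega)⟩⟩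

lemma scalar_bound' (A : ℕ → ℕ → E →L[ℂ] E) (z w : ℂ) (u v : E) (mn : ℕ × ℕ) :
    ‖(z ^ mn.1 * conj w ^ mn.2) * ⟪u, A mn.1 mn.2 v⟫‖ ≤
      ‖u‖ * ‖v‖ * (‖A mn.1 mn.2‖ * ‖z‖ ^ mn.1 * ‖w‖ ^ mn.2) := by
  rw [norm_mul, norm_mul, norm_pow, norm_pow]
  calc ‖z‖ ^ mn.1 * ‖conj w‖ ^ mn.2 * ‖⟪u, A mn.1 mn.2 v⟫‖
      ≤ ‖z‖ ^ mn.1 * ‖conj w‖ ^ mn.2 * (‖u‖ * (‖A mn.1 mn.2‖ * ‖v‖)) := by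
        apply mul_le_mul_of_nonneg_left _ (by positivity)
        exact norm_inner_le_norm _ _ |>.trans (by gcongr; exact (A mn.1 mn.2).le_opNorm v)
    _ = ‖u‖ * ‖v‖ * (‖A mn.1 mn.2‖ * ‖z‖ ^ mn.1 * ‖w‖ ^ mn.2) := by
        rw [RCLike.norm_conj]; ring

lemma scalar_summable' {z w : ℂ} (A : ℕ → ℕ → E →L[ℂ] E)
    (hzw : Summable (fun mn : ℕ × ℕ => ‖A mn.1 mn.2‖ * ‖z‖ ^ mn.1 * ‖w‖ ^ mn.2))
    (u v : E) :
    Summable (fun mn : ℕ × ℕ => (z ^ mn.1 * conj w ^ mn.2) * ⟪u, A mn.1 mn.2 v⟫) :=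
  Summable.of_norm_bounded (hzw.mul_left (‖u‖ * ‖v‖)) (scalar_bound' A z w u v)

variable [CompleteSpace E]

lemma op_summable' {z w : ℂ} (A : ℕ → ℕ → E →L[ℂ] E)
    (hzw : Summable (fun mn : ℕ × ℕ => ‖A mn.1 mn.2‖ * ‖z‖ ^ mn.1 * ‖w‖ ^ mn.2)) :
    Summable (fun mn : ℕ × ℕ => (z ^ mn.1 * conj w ^ mn.2) • A mn.1 mn.2) := by
  apply Summable.of_norm
  apply Summable.of_nonneg_of_le (fun mn => norm_nonneg _) _ hzw
  intro mn
  rw [norm_smul, norm_mul, norm_pow, norm_pow, RCLike.norm_conj]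
  ring_nf
  exact le_refl _

lemma inner_kernel_expand' {z w : ℂ} (A : ℕ → ℕ → E →L[ℂ] E)
    (hzw : Summable (fun mn : ℕ × ℕ => ‖A mn.1 mn.2‖ * ‖z‖ ^ mn.1 * ‖w‖ ^ mn.2))
    (u v : E) :
    ⟪u, (∑' mn : ℕ × ℕ, (z ^ mn.1 * conj w ^ mn.2) • A mn.1 mn.2) v⟫ =
      ∑' mn : ℕ × ℕ, (z ^ mn.1 * conj w ^ mn.2) * ⟪u, A mn.1 mn.2 v⟫ := by
  have hop := op_summable' A hzw
  have h1 : (∑' mn : ℕ × ℕ, (z ^ mn.1 * conj w ^ mn.2) • A mn.1 mn.2) v =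
      ∑' mn : ℕ × ℕ, ((z ^ mn.1 * conj w ^ mn.2) • A mn.1 mn.2) v := by
    exact (ContinuousLinearMap.apply ℂ E v).map_tsum hop
  rw [h1]
  have h2 : Summable (fun mn : ℕ × ℕ => ((z ^ mn.1 * conj w ^ mn.2) • A mn.1 mn.2) v) :=
    hop.map (ContinuousLinearMap.apply ℂ E v) (ContinuousLinearMap.apply ℂ E v).continuous
  simpa only [innerSL_apply_apply, ContinuousLinearMap.smul_apply, inner_smul_right]
    using (innerSL ℂ u).map_tsum h2

lemma double_sum_expand' {M : ℕ} (A : ℕ → ℕ → E →L[ℂ] E)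
    (hconv : ∀ z ∈ 𝔻, ∀ w ∈ 𝔻,
      Summable (fun mn : ℕ × ℕ => ‖A mn.1 mn.2‖ * ‖z‖ ^ mn.1 * ‖w‖ ^ mn.2))
    (κ : ℂ → ℂ → E →L[ℂ] E)
    (hκ : ∀ z ∈ 𝔻, ∀ w ∈ 𝔻,
      κ z w = ∑' mn : ℕ × ℕ, (z ^ mn.1 * conj w ^ mn.2) • A mn.1 mn.2)
    (z : Fin M → ℂ) (hz : ∀ i, z i ∈ 𝔻) (c : Fin M → E) :
    ∑ i, ∑ j, ⟪c j, κ (z j) (z i) (c i)⟫ =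
      ∑' mn : ℕ × ℕ, ∑ i, ∑ j,
        ((z j) ^ mn.1 * conj (z i) ^ mn.2) * ⟪c j, A mn.1 mn.2 (c i)⟫ := by
  have h1 : ∀ i j : Fin M, ⟪c j, κ (z j) (z i) (c i)⟫ =
      ∑' mn : ℕ × ℕ, ((z j) ^ mn.1 * conj (z i) ^ mn.2) * ⟪c j, A mn.1 mn.2 (c i)⟫ := by
    intro i j
    rw [hκ (z j) (hz j) (z i) (hz i)]
    exact inner_kernel_expand' A (hconv (z j) (hz j) (z i) (hz i)) (c j) (c i)
  calc ∑ i, ∑ j, ⟪c j, κ (z j) (z i) (c i)⟫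
      = ∑ i, ∑ j, ∑' mn : ℕ × ℕ,
          ((z j) ^ mn.1 * conj (z i) ^ mn.2) * ⟪c j, A mn.1 mn.2 (c i)⟫ := by
        exact Finset.sum_congr rfl fun i _ => Finset.sum_congr rfl fun j _ => h1 i j
    _ = ∑' mn : ℕ × ℕ, ∑ i, ∑ j,
          ((z j) ^ mn.1 * conj (z i) ^ mn.2) * ⟪c j, A mn.1 mn.2 (c i)⟫ := by
        rw [Summable.tsum_finsetSum (fun i _ => summable_sum fun j _ =>
          scalar_summable' A (hconv (z j) (hz j) (z i) (hz i)) (c j) (c i))]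
        apply Finset.sum_congr rfl
        intro i _
        rw [Summable.tsum_finsetSum (fun j _ =>
          scalar_summable' A (hconv (z j) (hz j) (z i) (hz i)) (c j) (c i))]

lemma mpr_dir' {M : ℕ} (A : ℕ → ℕ → E →L[ℂ] E)
    (hconv : ∀ z ∈ 𝔻, ∀ w ∈ 𝔻,
      Summable (fun mn : ℕ × ℕ => ‖A mn.1 mn.2‖ * ‖z‖ ^ mn.1 * ‖w‖ ^ mn.2))
    (κ : ℂ → ℂ → E →L[ℂ] E)
    (hκ : ∀ z ∈ 𝔻, ∀ w ∈ 𝔻,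
      κ z w = ∑' mn : ℕ × ℕ, (z ^ mn.1 * conj w ^ mn.2) • A mn.1 mn.2)
    (hA : ∀ (N : ℕ) (x : ℕ → E),
        0 ≤ ∑ m ∈ Finset.range (N + 1), ∑ n ∈ Finset.range (N + 1), ⟪x m, A m n (x n)⟫)
    (z : Fin M → ℂ) (hz : ∀ i, z i ∈ 𝔻) (c : Fin M → E) :
    0 ≤ ∑ i, ∑ j, ⟪c j, κ (z j) (z i) (c i)⟫ := by
  rw [double_sum_expand' A hconv κ hκ z hz c]
  set x : ℕ → E := fun m => ∑ j, (conj (z j))^m • c j with hx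
  have hSmn : ∀ mn : ℕ × ℕ,
      (∑ i, ∑ j, ((z j) ^ mn.1 * conj (z i) ^ mn.2) * ⟪c j, A mn.1 mn.2 (c i)⟫) =
        ⟪x mn.1, A mn.1 mn.2 (x mn.2)⟫ := by
    intro mn
    simp only [hx, sum_inner, inner_sum, map_sum, map_smul, inner_smul_left, inner_smul_right,
      map_pow, RingHomCompTriple.comp_apply, Complex.conj_conj, starRingEnd_self_apply,
      RingHom.id_apply, Finset.mul_sum]
    apply Finset.sum_congr rfl; intro i _
    apply Finset.sum_congr rfl; intro j _
    ring
  have hsum : Summable (fun mn : ℕ × ℕ =>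
      ∑ i, ∑ j, ((z j) ^ mn.1 * conj (z i) ^ mn.2) * ⟪c j, A mn.1 mn.2 (c i)⟫) :=
    summable_sum fun i _ => summable_sum fun j _ =>
      scalar_summable' A (hconv (z j) (hz j) (z i) (hz i)) (c j) (c i)
  have htend := (hsum.hasSum.comp square_tendsto')
  apply ge_of_tendsto' htend
  intro n
  simp only [Function.comp_apply]
  rw [Finset.sum_product]
  calc (0:ℂ) ≤ ∑ m ∈ Finset.range (n+1), ∑ k ∈ Finset.range (n+1), ⟪x m, A m k (x k)⟫ :=
        hA n x
    _ = _ := by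
        apply Finset.sum_congr rfl; intro m _
        apply Finset.sum_congr rfl; intro k _
        exact (hSmn (m, k)).symm

lemma collapse_left' {ζ : ℂ} {K : ℕ} (hK : K ≠ 0) (hprim : IsPrimitiveRoot ζ K)
    (habs : ‖ζ‖ = 1) (r : ℝ) (x : ℕ → E) (m : ℕ) (v : E) :
    ∑ j : Fin K, ((r:ℂ) * ζ ^ (j:ℕ)) ^ m *
        ⟪∑ p ∈ Finset.range K, (((K:ℂ))⁻¹ * ((r:ℂ)⁻¹) ^ p * ζ ^ ((j:ℕ) * p)) • x p, v⟫ =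
      (r:ℂ) ^ m * ((r:ℂ)⁻¹) ^ (m % K) * ⟪x (m % K), v⟫ := by
  have hKc : (K:ℂ) ≠ 0 := Nat.cast_ne_zero.2 hK
  have expand : ∀ j : Fin K,
      ⟪∑ p ∈ Finset.range K, (((K:ℂ))⁻¹ * ((r:ℂ)⁻¹) ^ p * ζ ^ ((j:ℕ) * p)) • x p, v⟫ =
      ∑ p ∈ Finset.range K,
        ((K:ℂ))⁻¹ * ((r:ℂ)⁻¹) ^ p * conj (ζ ^ ((j:ℕ) * p)) * ⟪x p, v⟫ := by
    intro j
    rw [sum_inner]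
    apply Finset.sum_congr rfl; intro p _
    rw [inner_smul_left]
    simp only [map_mul, map_inv₀, map_pow, Complex.conj_natCast, Complex.conj_ofReal]
  calc ∑ j : Fin K, ((r:ℂ) * ζ ^ (j:ℕ)) ^ m *
        ⟪∑ p ∈ Finset.range K, (((K:ℂ))⁻¹ * ((r:ℂ)⁻¹) ^ p * ζ ^ ((j:ℕ) * p)) • x p, v⟫
      = ∑ p ∈ Finset.range K, ∑ j : Fin K, ((r:ℂ) * ζ ^ (j:ℕ)) ^ m *
          (((K:ℂ))⁻¹ * ((r:ℂ)⁻¹) ^ p * conj (ζ ^ ((j:ℕ) * p)) * ⟪x p, v⟫) := by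
        rw [Finset.sum_comm]
        apply Finset.sum_congr rfl; intro j _
        rw [expand j, Finset.mul_sum]
    _ = ∑ p ∈ Finset.range K,
          ((r:ℂ) ^ m * ((K:ℂ))⁻¹ * ((r:ℂ)⁻¹) ^ p * ⟪x p, v⟫) *
            (if m % K = p % K then (K:ℂ) else 0) := by
        apply Finset.sum_congr rfl; intro p _
        rw [← root_sum' (ζ := ζ) hK hprim habs m p, Finset.mul_sum]
        apply Finset.sum_congr rfl; intro j _
        rw [mul_pow, ← pow_mul]
        ring
    _ = (r:ℂ) ^ m * ((r:ℂ)⁻¹) ^ (m % K) * ⟪x (m % K), v⟫ := by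
        rw [Finset.sum_eq_single (m % K)]
        · rw [Nat.mod_mod_of_dvd _ dvd_rfl, if_pos rfl]
          linear_combination ((r:ℂ) ^ m * ((r:ℂ)⁻¹) ^ (m % K) * ⟪x (m % K), v⟫) *
            mul_inv_cancel₀ hKc
        · intro p hp hne
          rw [Nat.mod_eq_of_lt (Finset.mem_range.1 hp), if_neg (fun h => hne h.symm), mul_zero]
        · intro h
          exact absurd (Finset.mem_range.2 (Nat.mod_lt _ (Nat.pos_of_ne_zero hK))) h

lemma collapse_right' {ζ : ℂ} {K : ℕ} (hK : K ≠ 0) (hprim : IsPrimitiveRoot ζ K)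
    (habs : ‖ζ‖ = 1) (r : ℝ) (x : ℕ → E) (n : ℕ) (u : E) (T : E →L[ℂ] E) :
    ∑ i : Fin K, conj ((r:ℂ) * ζ ^ (i:ℕ)) ^ n *
        ⟪u, T (∑ q ∈ Finset.range K, (((K:ℂ))⁻¹ * ((r:ℂ)⁻¹) ^ q * ζ ^ ((i:ℕ) * q)) • x q)⟫ =
      (r:ℂ) ^ n * ((r:ℂ)⁻¹) ^ (n % K) * ⟪u, T (x (n % K))⟫ := by
  have hKc : (K:ℂ) ≠ 0 := Nat.cast_ne_zero.2 hK
  have expand : ∀ i : Fin K,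
      ⟪u, T (∑ q ∈ Finset.range K, (((K:ℂ))⁻¹ * ((r:ℂ)⁻¹) ^ q * ζ ^ ((i:ℕ) * q)) • x q)⟫ =
      ∑ q ∈ Finset.range K,
        ((K:ℂ))⁻¹ * ((r:ℂ)⁻¹) ^ q * ζ ^ ((i:ℕ) * q) * ⟪u, T (x q)⟫ := by
    intro i
    rw [map_sum, inner_sum]
    apply Finset.sum_congr rfl; intro q _
    rw [map_smul, inner_smul_right]
  calc ∑ i : Fin K, conj ((r:ℂ) * ζ ^ (i:ℕ)) ^ n *
        ⟪u, T (∑ q ∈ Finset.range K, (((K:ℂ))⁻¹ * ((r:ℂ)⁻¹) ^ q * ζ ^ ((i:ℕ) * q)) • x q)⟫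
      = ∑ q ∈ Finset.range K, ∑ i : Fin K, conj ((r:ℂ) * ζ ^ (i:ℕ)) ^ n *
          (((K:ℂ))⁻¹ * ((r:ℂ)⁻¹) ^ q * ζ ^ ((i:ℕ) * q) * ⟪u, T (x q)⟫) := by
        rw [Finset.sum_comm]
        apply Finset.sum_congr rfl; intro i _
        rw [expand i, Finset.mul_sum]
    _ = ∑ q ∈ Finset.range K,
          ((r:ℂ) ^ n * ((K:ℂ))⁻¹ * ((r:ℂ)⁻¹) ^ q * ⟪u, T (x q)⟫) *
            (if q % K = n % K then (K:ℂ) else 0) := by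
        apply Finset.sum_congr rfl; intro q _
        rw [← root_sum' (ζ := ζ) hK hprim habs q n, Finset.mul_sum]
        apply Finset.sum_congr rfl; intro i _
        rw [map_mul, map_pow, Complex.conj_ofReal, mul_pow, ← pow_mul, map_pow]
        ring
    _ = (r:ℂ) ^ n * ((r:ℂ)⁻¹) ^ (n % K) * ⟪u, T (x (n % K))⟫ := by
        rw [Finset.sum_eq_single (n % K)]
        · rw [Nat.mod_mod_of_dvd _ dvd_rfl, if_pos rfl]
          linear_combination ((r:ℂ) ^ n * ((r:ℂ)⁻¹) ^ (n % K) * ⟪u, T (x (n % K))⟫) *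
            mul_inv_cancel₀ hKc
        · intro q hq hne
          rw [Nat.mod_eq_of_lt (Finset.mem_range.1 hq), if_neg hne, mul_zero]
        · intro h
          exact absurd (Finset.mem_range.2 (Nat.mod_lt _ (Nat.pos_of_ne_zero hK))) h

lemma Smn_eq' {ζ : ℂ} {K : ℕ} (hK : K ≠ 0) (hprim : IsPrimitiveRoot ζ K)
    (habs : ‖ζ‖ = 1) (r : ℝ) (x : ℕ → E) (z : Fin K → ℂ) (c : Fin K → E)
    (hz : ∀ j, z j = (r:ℂ) * ζ ^ (j:ℕ))
    (hc : ∀ j, c j = ∑ p ∈ Finset.range K,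
      (((K:ℂ))⁻¹ * ((r:ℂ)⁻¹) ^ p * ζ ^ ((j:ℕ) * p)) • x p)
    (T : E →L[ℂ] E) (m n : ℕ) :
    ∑ i : Fin K, ∑ j : Fin K, ((z j) ^ m * conj (z i) ^ n) * ⟪c j, T (c i)⟫ =
      ((r:ℂ) ^ m * ((r:ℂ)⁻¹) ^ (m % K)) * ((r:ℂ) ^ n * ((r:ℂ)⁻¹) ^ (n % K)) *
        ⟪x (m % K), T (x (n % K))⟫ := by
  simp only [funext hz, funext hc]
  calc ∑ i : Fin K, ∑ j : Fin K, (((r:ℂ) * ζ ^ (j:ℕ)) ^ m * conj ((r:ℂ) * ζ ^ (i:ℕ)) ^ n) *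
        ⟪∑ p ∈ Finset.range K, (((K:ℂ))⁻¹ * ((r:ℂ)⁻¹) ^ p * ζ ^ ((j:ℕ) * p)) • x p,
          T (∑ q ∈ Finset.range K, (((K:ℂ))⁻¹ * ((r:ℂ)⁻¹) ^ q * ζ ^ ((i:ℕ) * q)) • x q)⟫
      = ∑ i : Fin K, conj ((r:ℂ) * ζ ^ (i:ℕ)) ^ n * ∑ j : Fin K, ((r:ℂ) * ζ ^ (j:ℕ)) ^ m *
          ⟪∑ p ∈ Finset.range K, (((K:ℂ))⁻¹ * ((r:ℂ)⁻¹) ^ p * ζ ^ ((j:ℕ) * p)) • x p,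
            T (∑ q ∈ Finset.range K, (((K:ℂ))⁻¹ * ((r:ℂ)⁻¹) ^ q * ζ ^ ((i:ℕ) * q)) • x q)⟫ := by
        apply Finset.sum_congr rfl; intro i _
        rw [Finset.mul_sum]
        apply Finset.sum_congr rfl; intro j _
        ring
    _ = ∑ i : Fin K, conj ((r:ℂ) * ζ ^ (i:ℕ)) ^ n *
          ((r:ℂ) ^ m * ((r:ℂ)⁻¹) ^ (m % K) *
            ⟪x (m % K),
              T (∑ q ∈ Finset.range K, (((K:ℂ))⁻¹ * ((r:ℂ)⁻¹) ^ q * ζ ^ ((i:ℕ) * q)) • x q)⟫) := by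
        apply Finset.sum_congr rfl; intro i _
        rw [collapse_left' hK hprim habs r x m]
    _ = ((r:ℂ) ^ m * ((r:ℂ)⁻¹) ^ (m % K)) * ∑ i : Fin K, conj ((r:ℂ) * ζ ^ (i:ℕ)) ^ n *
          ⟪x (m % K),
            T (∑ q ∈ Finset.range K, (((K:ℂ))⁻¹ * ((r:ℂ)⁻¹) ^ q * ζ ^ ((i:ℕ) * q)) • x q)⟫ := by
        rw [Finset.mul_sum]
        apply Finset.sum_congr rfl; intro i _
        ring
    _ = ((r:ℂ) ^ m * ((r:ℂ)⁻¹) ^ (m % K)) *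
          ((r:ℂ) ^ n * ((r:ℂ)⁻¹) ^ (n % K) * ⟪x (m % K), T (x (n % K))⟫) := by
        rw [collapse_right' hK hprim habs r x n]
    _ = _ := by ring

end Aux

theorem kernel_psd_iff_coeff_matrix_psd
    (E : Type*) [NormedAddCommGroup E] [InnerProductSpace ℂ E] [CompleteSpace E]
    [TopologicalSpace.SeparableSpace E]
    (A : ℕ → ℕ → E →L[ℂ] E)
    (hconv : ∀ z ∈ 𝔻, ∀ w ∈ 𝔻,
      Summable (fun mn : ℕ × ℕ => ‖A mn.1 mn.2‖ * ‖z‖ ^ mn.1 * ‖w‖ ^ mn.2))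
    (κ : ℂ → ℂ → E →L[ℂ] E)
    (hκ : ∀ z ∈ 𝔻, ∀ w ∈ 𝔻,
      κ z w = ∑' mn : ℕ × ℕ, (z ^ mn.1 * conj w ^ mn.2) • A mn.1 mn.2) :
    (∀ (N : ℕ) (z : Fin N → ℂ), (∀ i, z i ∈ 𝔻) → ∀ c : Fin N → E,
        0 ≤ ∑ i, ∑ j, ⟪c j, κ (z j) (z i) (c i)⟫) ↔
      (∀ (N : ℕ) (x : ℕ → E),
        0 ≤ ∑ m ∈ Finset.range (N + 1), ∑ n ∈ Finset.range (N + 1),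
          ⟪x m, A m n (x n)⟫) := by
  constructor
  · -- kernel PSD → coefficient PSD
    intro hker N x
    set K := N + 1 with hKdef
    have hK : K ≠ 0 := Nat.succ_ne_zero N
    have hKpos : (0:ℕ) < K := Nat.pos_of_ne_zero hK
    set ζ : ℂ := Complex.exp (2 * ↑Real.pi * I / K) with hζdef
    have hprim : IsPrimitiveRoot ζ K := Complex.isPrimitiveRoot_exp K hK
    have habs : ‖ζ‖ = 1 := by
      rw [hζdef]
      have : 2 * (↑Real.pi) * I / (K:ℂ) = ((2 * Real.pi / K : ℝ) : ℂ) * I := by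
        push_cast; ring
      rw [this, Complex.norm_exp_ofReal_mul_I]
    -- the target
    set T : ℂ := ∑ m ∈ Finset.range K, ∑ n ∈ Finset.range K, ⟪x m, A m n (x n)⟫ with hT
    -- bound data
    set B : ℝ := ∑ p ∈ Finset.range K, ‖x p‖ with hB
    have hBmem : ∀ m : ℕ, ‖x (m % K)‖ ≤ B := by
      intro m
      exact Finset.single_le_sum (f := fun p => ‖x p‖) (fun p _ => norm_nonneg _)
        (Finset.mem_range.2 (Nat.mod_lt _ hKpos))
    have hB0 : 0 ≤ B := Finset.sum_nonneg fun p _ => norm_nonneg _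
    have hhalfmem : ((1/2 : ℝ) : ℂ) ∈ 𝔻 := by
      simp [Metric.mem_ball, Complex.dist_eq]
      norm_num
    have hbnd_sum : Summable (fun mn : ℕ × ℕ =>
        ‖A mn.1 mn.2‖ * (1/2 : ℝ) ^ mn.1 * (1/2 : ℝ) ^ mn.2) := by
      have := hconv _ hhalfmem _ hhalfmem
      simpa [Complex.norm_real, abs_of_pos] using this
    set D : ℝ := ∑' mn : ℕ × ℕ, ‖A mn.1 mn.2‖ * (1/2 : ℝ) ^ mn.1 * (1/2 : ℝ) ^ mn.2 with hD
    have hD0 : 0 ≤ D := tsum_nonneg fun mn => by positivity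
    set C : ℝ := 2 ^ (2*N) * B ^ 2 * D with hC
    have hC0 : 0 ≤ C := by positivity
    -- approximation: for every small r > 0 we exhibit a nonnegative τ close to T
    have key : ∀ r : ℝ, 0 < r → r ≤ 1/2 → ∃ τ : ℂ, 0 ≤ τ ∧ ‖T - τ‖ ≤ (2*r) ^ K * C := by
      intro r hr hr2
      have hr1 : r < 1 := lt_of_le_of_lt hr2 (by norm_num)
      have hrne : (r:ℂ) ≠ 0 := by exact_mod_cast hr.ne'
      set z : Fin K → ℂ := fun j => (r:ℂ) * ζ ^ (j:ℕ) with hzdef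
      set c : Fin K → E := fun j => ∑ p ∈ Finset.range K,
        (((K:ℂ))⁻¹ * ((r:ℂ)⁻¹) ^ p * ζ ^ ((j:ℕ) * p)) • x p with hcdef
      have hzmem : ∀ j, z j ∈ 𝔻 := by
        intro j
        simp only [hzdef, Metric.mem_ball, dist_zero_right, norm_mul,
          norm_pow, habs, one_pow, mul_one, Complex.norm_real, Real.norm_eq_abs]
        rwa [abs_of_pos hr]
      set τ : ℂ := ∑ i, ∑ j, ⟪c j, κ (z j) (z i) (c i)⟫ with hτ
      have hτ0 : 0 ≤ τ := hker K z hzmem c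
      refine ⟨τ, hτ0, ?_⟩
      -- expand τ as a tsum
      have hexp := double_sum_expand' A hconv κ hκ z hzmem c
      set S : ℕ × ℕ → ℂ := fun mn => ∑ i, ∑ j,
        ((z j) ^ mn.1 * conj (z i) ^ mn.2) * ⟪c j, A mn.1 mn.2 (c i)⟫ with hSdef
      have hSsum : Summable S :=
        summable_sum fun i _ => summable_sum fun j _ =>
          scalar_summable' A (hconv (z j) (hzmem j) (z i) (hzmem i)) (c j) (c i)
      -- closed form of S
      have hSmn : ∀ mn : ℕ × ℕ, S mn =
          ((r:ℂ) ^ mn.1 * ((r:ℂ)⁻¹) ^ (mn.1 % K)) * ((r:ℂ) ^ mn.2 * ((r:ℂ)⁻¹) ^ (mn.2 % K)) *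
            ⟪x (mn.1 % K), A mn.1 mn.2 (x (mn.2 % K))⟫ := by
        intro mn
        exact Smn_eq' hK hprim habs r x z c (fun j => rfl) (fun j => rfl) (A mn.1 mn.2) mn.1 mn.2
      -- the square sum equals T
      have hsq : ∑ mn ∈ Finset.range K ×ˢ Finset.range K, S mn = T := by
        rw [Finset.sum_product, hT]
        apply Finset.sum_congr rfl; intro m hm
        apply Finset.sum_congr rfl; intro n hn
        rw [hSmn (m, n)]
        simp only
        rw [Nat.mod_eq_of_lt (Finset.mem_range.1 hm), Nat.mod_eq_of_lt (Finset.mem_range.1 hn)]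
        rw [← mul_pow, ← mul_pow, mul_inv_cancel₀ hrne, one_pow, one_pow, one_mul, one_mul]
      -- splitting
      have hsplit := Summable.sum_add_tsum_compl (s := Finset.range K ×ˢ Finset.range K) hSsum
      rw [hsq] at hsplit
      have hτS : τ = T + ∑' mn : ↑((Finset.range K ×ˢ Finset.range K : Finset (ℕ × ℕ)) : Set (ℕ × ℕ))ᶜ, S mn := by
        rw [hsplit, hτ, hexp]
      rw [hτS]
      have : T - (T + ∑' mn : ↑((Finset.range K ×ˢ Finset.range K : Finset (ℕ × ℕ)) : Set (ℕ × ℕ))ᶜ, S mn)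
          = -(∑' mn : ↑((Finset.range K ×ˢ Finset.range K : Finset (ℕ × ℕ)) : Set (ℕ × ℕ))ᶜ, S mn) := by
        ring
      rw [this, norm_neg]
      -- bound the tail
      have hbound : ∀ mn : ↑((Finset.range K ×ˢ Finset.range K : Finset (ℕ × ℕ)) : Set (ℕ × ℕ))ᶜ,
          ‖S mn‖ ≤ (2*r) ^ K * (2 ^ (2*N) * B ^ 2 *
            (‖A (mn:ℕ×ℕ).1 (mn:ℕ×ℕ).2‖ * (1/2 : ℝ) ^ (mn:ℕ×ℕ).1 * (1/2 : ℝ) ^ (mn:ℕ×ℕ).2)) := by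
        rintro ⟨⟨m, n⟩, hmn⟩
        simp only [Set.mem_compl_iff, Finset.coe_mem, Finset.mem_coe, Finset.mem_product,
          Finset.mem_range, not_and_or, not_lt] at hmn
        simp only
        rw [hSmn (m, n)]
        -- norm computation
        have hm_le : m % K ≤ m := Nat.mod_le m K
        have hn_le : n % K ≤ n := Nat.mod_le n K
        have hmK : m % K ≤ N := by
          have := Nat.mod_lt m hKpos; omega
        have hnK : n % K ≤ N := by
          have := Nat.mod_lt n hKpos; omega
        set e : ℕ := (m - m % K) + (n - n % K) with he
        have hKe : K ≤ e := by
          have h1 : K * (m / K) = m - m % K := by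
            have := Nat.div_add_mod m K; omega
          have h2 : K * (n / K) = n - n % K := by
            have := Nat.div_add_mod n K; omega
          rcases hmn with hm | hn
          · have : 1 ≤ m / K := Nat.one_le_div_iff hKpos |>.2 hm
            have : K * 1 ≤ K * (m / K) := Nat.mul_le_mul_left K this
            omega
          · have : 1 ≤ n / K := Nat.one_le_div_iff hKpos |>.2 hn
            have : K * 1 ≤ K * (n / K) := Nat.mul_le_mul_left K this
            omega
        have he_le : e ≤ m + n := by omega
        have hmne : m + n ≤ e + 2*N := by omega
        have hnorm : ‖((r:ℂ) ^ m * ((r:ℂ)⁻¹) ^ (m % K)) * ((r:ℂ) ^ n * ((r:ℂ)⁻¹) ^ (n % K)) *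
            ⟪x (m % K), A m n (x (n % K))⟫‖ ≤ r ^ e * (B * (‖A m n‖ * B)) := by
          rw [norm_mul, norm_mul, norm_mul, norm_mul]
          have h1 : ‖(r:ℂ) ^ m‖ * ‖((r:ℂ)⁻¹) ^ (m % K)‖ = r ^ (m - m % K) := by
            rw [norm_pow, norm_pow, norm_inv, Complex.norm_real, Real.norm_eq_abs,
              abs_of_pos hr, pow_sub₀ r hr.ne' hm_le, inv_pow]
          have h2 : ‖(r:ℂ) ^ n‖ * ‖((r:ℂ)⁻¹) ^ (n % K)‖ = r ^ (n - n % K) := by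
            rw [norm_pow, norm_pow, norm_inv, Complex.norm_real, Real.norm_eq_abs,
              abs_of_pos hr, pow_sub₀ r hr.ne' hn_le, inv_pow]
          rw [h1, h2, he, pow_add]
          have hinner : ‖⟪x (m % K), A m n (x (n % K))⟫‖ ≤ B * (‖A m n‖ * B) := by
            refine (norm_inner_le_norm _ _).trans ?_
            have := (A m n).le_opNorm (x (n % K))
            calc ‖x (m % K)‖ * ‖(A m n) (x (n % K))‖
                ≤ B * (‖A m n‖ * ‖x (n % K)‖) := by
                  apply mul_le_mul (hBmem m) this (norm_nonneg _) hB0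
              _ ≤ B * (‖A m n‖ * B) := by
                  apply mul_le_mul_of_nonneg_left _ hB0
                  exact mul_le_mul_of_nonneg_left (hBmem n) (norm_nonneg _)
          apply mul_le_mul _ hinner (norm_nonneg _) (by positivity)
          exact le_refl _
        refine hnorm.trans ?_
        -- now the pure power estimate
        have hpow : r ^ e ≤ (2*r) ^ K * (2 ^ (2*N) * ((1/2:ℝ) ^ m * (1/2:ℝ) ^ n)) := by
          have h1 : r ^ e = r ^ K * r ^ (e - K) := by
            rw [← pow_add]; congr 1; omega
          have h2 : r ^ (e - K) ≤ (1/2:ℝ) ^ (e - K) :=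
            pow_le_pow_left₀ hr.le hr2 _
          have h3 : (1/2:ℝ) ^ (e - K) * ((1/2:ℝ) ^ ((m + n) - e + K)) = (1/2:ℝ) ^ (m+n) := by
            rw [← pow_add]; congr 1; omega
          have h4 : (1:ℝ) ≤ (1/2:ℝ) ^ ((m + n) - e + K) * (2:ℝ) ^ (2*N + K) := by
            have ha : (m + n) - e + K ≤ 2*N + K := by omega
            have : ((1:ℝ)/2) ^ ((m + n) - e + K) = ((2:ℝ) ^ ((m + n) - e + K))⁻¹ := by
              rw [one_div, inv_pow]
            rw [this, ← div_eq_inv_mul, le_div_iff₀ (by positivity), one_mul]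
            exact pow_le_pow_right₀ (by norm_num) ha
          calc r ^ e = r ^ K * r ^ (e - K) := h1
            _ ≤ r ^ K * (1/2:ℝ) ^ (e - K) := by
                apply mul_le_mul_of_nonneg_left h2 (by positivity)
            _ = r ^ K * ((1/2:ℝ) ^ (e - K) * 1) := by ring
            _ ≤ r ^ K * ((1/2:ℝ) ^ (e - K) *
                ((1/2:ℝ) ^ ((m + n) - e + K) * (2:ℝ) ^ (2*N + K))) := by
                apply mul_le_mul_of_nonneg_left _ (by positivity)
                apply mul_le_mul_of_nonneg_left h4 (by positivity)
            _ = (2:ℝ) ^ K * r ^ K * ((2:ℝ) ^ (2*N) * ((1/2:ℝ) ^ (m + n))) := by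
                rw [← mul_assoc ((1/2:ℝ) ^ (e - K)), h3, pow_add (2:ℝ)]
                ring
            _ = (2*r) ^ K * (2 ^ (2*N) * ((1/2:ℝ) ^ m * (1/2:ℝ) ^ n)) := by
                rw [mul_pow]
                ring
        calc r ^ e * (B * (‖A m n‖ * B))
            ≤ ((2*r) ^ K * (2 ^ (2*N) * ((1/2:ℝ) ^ m * (1/2:ℝ) ^ n))) * (B * (‖A m n‖ * B)) := by
              apply mul_le_mul_of_nonneg_right hpow (by positivity)
          _ = (2*r) ^ K * (2 ^ (2*N) * B ^ 2 * (‖A m n‖ * (1/2:ℝ) ^ m * (1/2:ℝ) ^ n)) := by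
              ring
      -- summability of the bound over the complement
      have hgsum : Summable (fun mn : ↑((Finset.range K ×ˢ Finset.range K : Finset (ℕ × ℕ)) : Set (ℕ × ℕ))ᶜ =>
          (2*r) ^ K * (2 ^ (2*N) * B ^ 2 *
            (‖A (mn:ℕ×ℕ).1 (mn:ℕ×ℕ).2‖ * (1/2 : ℝ) ^ (mn:ℕ×ℕ).1 * (1/2 : ℝ) ^ (mn:ℕ×ℕ).2))) := by
        apply Summable.mul_left
        apply Summable.mul_left
        exact hbnd_sum.subtype _
      have htail : ‖∑' mn : ↑((Finset.range K ×ˢ Finset.range K : Finset (ℕ × ℕ)) : Set (ℕ × ℕ))ᶜ, S mn‖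
          ≤ (2*r) ^ K * C := by
        refine (tsum_of_norm_bounded hgsum.hasSum hbound).trans ?_
        rw [tsum_mul_left, tsum_mul_left, hC]
        apply mul_le_mul_of_nonneg_left _ (by positivity)
        apply mul_le_mul_of_nonneg_left _ (by positivity)
        rw [hD]
        exact Summable.tsum_subtype_le _ _ (fun mn => by positivity) hbnd_sum
      exact htail
    -- conclude by a closure argument
    have hTmem : T ∈ closure (Set.Ici (0:ℂ)) := by
      rw [Metric.mem_closure_iff]
      intro ε hε
      -- choose r
      set r : ℝ := min (1/2) (ε / (2 * (C + 1))) with hr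
      have hrpos : 0 < r := lt_min (by norm_num) (by positivity)
      have hr2 : r ≤ 1/2 := min_le_left _ _
      obtain ⟨τ, hτ0, hτ⟩ := key r hrpos hr2
      refine ⟨τ, hτ0, ?_⟩
      rw [Complex.dist_eq]
      have h2r : (2*r) ^ K ≤ 2 * r := by
        apply pow_le_of_le_one (by positivity) _ hK
        calc 2 * r ≤ 2 * (1/2) := by linarith
          _ = 1 := by norm_num
      have hfin : (2*r) ^ K * C < ε := by
        calc (2*r) ^ K * C ≤ (2 * r) * C := by
              apply mul_le_mul_of_nonneg_right h2r hC0
          _ ≤ (2 * (ε / (2 * (C + 1)))) * C := by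
              apply mul_le_mul_of_nonneg_right _ hC0
              have : r ≤ ε / (2 * (C + 1)) := min_le_right _ _
              linarith
          _ = ε * (C / (C + 1)) := by
              field_simp
          _ < ε := by
              have h1 : C / (C + 1) < 1 := by
                rw [div_lt_one (by positivity)]; linarith
              calc ε * (C / (C + 1)) < ε * 1 := by
                    rcases eq_or_lt_of_le hC0 with h | h
                    · rw [← h]; simpa using hε
                    · exact mul_lt_mul_of_pos_left h1 hε
                _ = ε := mul_one ε
      have := hτ.trans hfin.le
      -- we need strict: show ‖T - τ‖ < ε; use ≤ combined with... take strictness from hfin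
      exact lt_of_le_of_lt hτ hfin
    have : IsClosed (Set.Ici (0:ℂ)) := isClosed_Ici
    exact this.closure_subset hTmem
  · -- coefficient PSD → kernel PSD
    intro hA N z hz c
    exact mpr_dir' A hconv κ hκ hA z hz c
end
end

section
/- Let φ : 𝔻 → ℂ be holomorphic with Taylor expansion φ(z) = Σ_{j≥0} c_j z^j. For integers m,n ≥ 0 define g_{m,n} = δ_{m,n} + Σ_{k=0}^n conj(c_{m−n+k})·c_k when m ≥ n, and g_{m,n} = Σ_{j=0}^m conj(c_j)·c_{n−m+j} when m < n. Then for all z,w ∈ 𝔻 the double series Σ_{m,n≥0} g_{m,n}·z^n·conj(w)^m converges absolutely, and its sum equals (1 + φ(z)·conj(φ(w)))/(1 − z·conj(w)). -/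
open scoped ComplexConjugate
open Complex

noncomputable section

local notation "𝔻" => Metric.ball (0:ℂ) 1

open Filter Function

set_option maxHeartbeats 1000000

/-- The complex absolute value, as an `AbsoluteValue` (removed from Mathlib). -/
def Complex.abs : AbsoluteValue ℂ ℝ := NormedField.toAbsoluteValue ℂ

@[simp] lemma Complex.norm_eq_abs (z : ℂ) : ‖z‖ = Complex.abs z := rfl

@[simp] lemma Complex.abs_conj (z : ℂ) : Complex.abs (conj z) = Complex.abs z := Complex.norm_conj z

@[simp] lemma Complex.abs_ofReal (x : ℝ) : Complex.abs (x : ℂ) = |x| := Complex.norm_real x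

lemma coeff_summable (c : ℕ → ℂ) (hc : ∀ z ∈ 𝔻, Summable (fun j : ℕ => c j * z ^ j))
    {r : ℝ} (hr0 : 0 ≤ r) (hr1 : r < 1) :
    Summable (fun j : ℕ => Complex.abs (c j) * r ^ j) := by
  obtain ⟨s, hrs, hs1⟩ := exists_between hr1
  have hs0 : 0 < s := lt_of_le_of_lt hr0 hrs
  have hmem : (s : ℂ) ∈ 𝔻 := by
    simp only [Metric.mem_ball, dist_zero_right, Complex.norm_eq_abs, Complex.abs_ofReal,
      abs_of_pos hs0]
    exact hs1
  have hsum := hc _ hmem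
  have htend := hsum.tendsto_atTop_zero
  have h2 : Tendsto (fun j => Complex.abs (c j) * s ^ j) atTop (nhds 0) := by
    have := htend.norm
    simp only [Complex.norm_eq_abs, map_mul, norm_zero] at this
    convert this using 2 with j
    rw [← Complex.ofReal_pow, Complex.abs_ofReal, _root_.abs_of_nonneg (pow_nonneg hs0.le j)]
  obtain ⟨M, hM⟩ := h2.bddAbove_range
  have hM' : ∀ j, Complex.abs (c j) * s ^ j ≤ M := fun j => hM (Set.mem_range_self j)
  refine Summable.of_nonneg_of_le (f := fun j => M * (r / s) ^ j)
    (fun j => mul_nonneg (Complex.abs.nonneg _) (pow_nonneg hr0 _)) (fun j => ?_) ?_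
  · have hsr : s * (r / s) = r := by field_simp
    have he : Complex.abs (c j) * r ^ j = (Complex.abs (c j) * s ^ j) * (r / s) ^ j := by
      rw [mul_assoc, ← mul_pow, hsr]
    rw [he]
    exact mul_le_mul_of_nonneg_right (hM' j) (pow_nonneg (div_nonneg hr0 hs0.le) j)
  · exact (summable_geometric_of_lt_one (div_nonneg hr0 hs0.le)
      (by rw [div_lt_one hs0]; exact hrs)).mul_left M

/-- The triple-indexed summand: `x = (t, j, k)` maps to
`conj (c j) * c k * z ^ (k + t) * (conj w) ^ (j + t)`. -/
def uF (c : ℕ → ℂ) (z w : ℂ) : ℕ × ℕ × ℕ → ℂ := fun x =>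
  conj (c x.2.1) * c x.2.2 * z ^ (x.2.2 + x.1) * conj w ^ (x.2.1 + x.1)

/-- The grouped summand: `x = ((m, n), p)` with `p ≤ min m n`. -/
def UF (c : ℕ → ℂ) (z w : ℂ) : (ℕ × ℕ) × ℕ → ℂ := fun x =>
  if x.2 ≤ min x.1.1 x.1.2 then
    conj (c (x.1.1 - min x.1.1 x.1.2 + x.2)) * c (x.1.2 - min x.1.1 x.1.2 + x.2)
      * z ^ x.1.2 * conj w ^ x.1.1
  else 0

/-- Reindexing map. -/
def IF : (ℕ × ℕ) × ℕ → ℕ × ℕ × ℕ := fun x =>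
  (min x.1.1 x.1.2 - x.2, x.1.1 - min x.1.1 x.1.2 + x.2, x.1.2 - min x.1.1 x.1.2 + x.2)

lemma IF_val (c : ℕ → ℂ) (z w : ℂ) :
    ∀ x : (ℕ × ℕ) × ℕ, x.2 ≤ min x.1.1 x.1.2 → uF c z w (IF x) = UF c z w x := by
  rintro ⟨⟨m, n⟩, p⟩ hp
  have h1 : min m n ≤ m := Nat.min_le_left m n
  have h2 : min m n ≤ n := Nat.min_le_right m n
  simp only [uF, UF, IF] at hp ⊢
  rw [if_pos hp]
  have e1 : (n - min m n + p) + (min m n - p) = n := by omega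
  have e2 : (m - min m n + p) + (min m n - p) = m := by omega
  rw [e1, e2]

lemma IF_inj : ∀ x y : (ℕ × ℕ) × ℕ, x.2 ≤ min x.1.1 x.1.2 → y.2 ≤ min y.1.1 y.1.2 →
    IF x = IF y → x = y := by
  rintro ⟨⟨m, n⟩, p⟩ ⟨⟨m', n'⟩, p'⟩ hp hp' h
  simp only [IF, Prod.mk.injEq] at h hp hp' ⊢
  omega

lemma IF_surj (c : ℕ → ℂ) (z w : ℂ) :
    ∀ y : ℕ × ℕ × ℕ, ∃ x : (ℕ × ℕ) × ℕ, x.2 ≤ min x.1.1 x.1.2 ∧ IF x = y ∧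
      UF c z w x = uF c z w y := by
  rintro ⟨t, j, k⟩
  refine ⟨((j + t, k + t), min j k), ?_, ?_, ?_⟩
  · simp only; omega
  · simp only [IF, Prod.mk.injEq]; omega
  · have hle : (((j + t, k + t), min j k) : (ℕ × ℕ) × ℕ).2 ≤ min (j + t) (k + t) := by
      simp only; omega
    have hIx : IF ((j + t, k + t), min j k) = (t, j, k) := by
      simp only [IF, Prod.mk.injEq]; omega
    rw [← IF_val c z w _ hle, hIx]

/-- Diagonal summand. -/
def DF (z w : ℂ) : ℕ × ℕ → ℂ := fun mn =>
  if mn.1 = mn.2 then (z * conj w) ^ mn.1 else 0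

theorem cauchy_dual_kernel_series
    (φ : ℂ → ℂ) (c : ℕ → ℂ)
    (hφ : ∀ z ∈ 𝔻, HasSum (fun j : ℕ => c j * z ^ j) (φ z))
    (g : ℕ → ℕ → ℂ)
    (hg : ∀ m n : ℕ, g m n =
      if n ≤ m then
        (if m = n then 1 else 0) +
          ∑ k ∈ Finset.range (n + 1), conj (c (m - n + k)) * c k
      else
        ∑ j ∈ Finset.range (m + 1), conj (c j) * c (n - m + j)) :
    ∀ z ∈ 𝔻, ∀ w ∈ 𝔻,
      Summable (fun mn : ℕ × ℕ => ‖g mn.1 mn.2 * z ^ mn.2 * conj w ^ mn.1‖) ∧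
      ∑' mn : ℕ × ℕ, g mn.1 mn.2 * z ^ mn.2 * conj w ^ mn.1 =
        (1 + φ z * conj (φ w)) / (1 - z * conj w) := by
  intro z hz w hw
  have hz1 : Complex.abs z < 1 := by
    simpa [Metric.mem_ball, Complex.dist_eq] using hz
  have hw1 : Complex.abs w < 1 := by
    simpa [Metric.mem_ball, Complex.dist_eq] using hw
  have hS1 : Summable (fun j : ℕ => Complex.abs (c j) * Complex.abs w ^ j) :=
    coeff_summable c (fun x hx => (hφ x hx).summable) (Complex.abs.nonneg w) hw1
  have hS2 : Summable (fun k : ℕ => Complex.abs (c k) * Complex.abs z ^ k) :=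
    coeff_summable c (fun x hx => (hφ x hx).summable) (Complex.abs.nonneg z) hz1
  have hab : Complex.abs z * Complex.abs w < 1 :=
    lt_of_le_of_lt (mul_le_of_le_one_right (Complex.abs.nonneg z) hw1.le) hz1
  have hS3 : Summable (fun t : ℕ => (Complex.abs z * Complex.abs w) ^ t) :=
    summable_geometric_of_lt_one
      (mul_nonneg (Complex.abs.nonneg z) (Complex.abs.nonneg w)) hab
  have hAnorm : ‖z * conj w‖ < 1 := by
    rwa [norm_mul, Complex.norm_eq_abs, Complex.norm_eq_abs, Complex.abs_conj]
  -- summability of |u|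
  have hQR : Summable (fun x : ℕ × ℕ =>
      (Complex.abs (c x.1) * Complex.abs w ^ x.1) *
      (Complex.abs (c x.2) * Complex.abs z ^ x.2)) :=
    hS1.mul_of_nonneg hS2
      (fun j => mul_nonneg (Complex.abs.nonneg _) (pow_nonneg (Complex.abs.nonneg _) _))
      (fun k => mul_nonneg (Complex.abs.nonneg _) (pow_nonneg (Complex.abs.nonneg _) _))
  have hu_abs : Summable (fun x : ℕ × ℕ × ℕ => Complex.abs (uF c z w x)) := by
    have h := hS3.mul_of_nonneg hQR
      (fun t => pow_nonneg (mul_nonneg (Complex.abs.nonneg z) (Complex.abs.nonneg w)) _)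
      (fun x => mul_nonneg
        (mul_nonneg (Complex.abs.nonneg _) (pow_nonneg (Complex.abs.nonneg _) _))
        (mul_nonneg (Complex.abs.nonneg _) (pow_nonneg (Complex.abs.nonneg _) _)))
    refine h.congr fun x => ?_
    obtain ⟨t, j, k⟩ := x
    simp only [uF, map_mul, map_pow, Complex.abs_conj, mul_pow, pow_add]
    ring
  -- value of ∑' u
  have htP : Summable (fun t : ℕ => ‖(z * conj w) ^ t‖) := by
    simpa only [norm_pow, Complex.norm_eq_abs, map_mul, Complex.abs_conj] using hS3
  have htR : Summable (fun j : ℕ => ‖conj (c j) * conj w ^ j‖) :=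
    hS1.congr fun j => by
      simp [Complex.norm_eq_abs, map_mul, map_pow, Complex.abs_conj]
  have htS : Summable (fun k : ℕ => ‖c k * z ^ k‖) :=
    hS2.congr fun k => by simp [Complex.norm_eq_abs, map_mul, map_pow]
  have hQnorm : Summable (fun x : ℕ × ℕ =>
      ‖(conj (c x.1) * conj w ^ x.1) * (c x.2 * z ^ x.2)‖) :=
    Summable.mul_norm (R := ℂ) (f := fun j => conj (c j) * conj w ^ j)
      (g := fun k => c k * z ^ k) htR htS
  have hRsum : HasSum (fun j : ℕ => conj (c j) * conj w ^ j) (conj (φ w)) := by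
    have h := (hφ w hw).star
    simpa [RCLike.star_def, map_mul, map_pow] using h
  have htsum_u : ∑' x : ℕ × ℕ × ℕ, uF c z w x
      = (1 - z * conj w)⁻¹ * (conj (φ w) * φ z) := by
    have hfact : ∀ x : ℕ × ℕ × ℕ, uF c z w x
        = (z * conj w) ^ x.1 * ((conj (c x.2.1) * conj w ^ x.2.1) * (c x.2.2 * z ^ x.2.2)) := by
      rintro ⟨t, j, k⟩
      simp only [uF, mul_pow, pow_add]
      ring
    calc ∑' x : ℕ × ℕ × ℕ, uF c z w x
        = ∑' x : ℕ × ℕ × ℕ, (z * conj w) ^ x.1 *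
            ((conj (c x.2.1) * conj w ^ x.2.1) * (c x.2.2 * z ^ x.2.2)) := tsum_congr hfact
      _ = (∑' t : ℕ, (z * conj w) ^ t) * (∑' x : ℕ × ℕ,
            (conj (c x.1) * conj w ^ x.1) * (c x.2 * z ^ x.2)) :=
          (tsum_mul_tsum_of_summable_norm (f := fun t : ℕ => (z * conj w) ^ t)
            (g := fun x : ℕ × ℕ => (conj (c x.1) * conj w ^ x.1) * (c x.2 * z ^ x.2))
            htP hQnorm).symm
      _ = (1 - z * conj w)⁻¹ * (conj (φ w) * φ z) := by
          rw [tsum_geometric_of_norm_lt_one hAnorm,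
            ← tsum_mul_tsum_of_summable_norm (f := fun j : ℕ => conj (c j) * conj w ^ j)
              (g := fun k : ℕ => c k * z ^ k) htR htS, hRsum.tsum_eq, (hφ z hz).tsum_eq]
  -- support facts for UF
  have hUsupp : ∀ x : (ℕ × ℕ) × ℕ, UF c z w x ≠ 0 → x.2 ≤ min x.1.1 x.1.2 := by
    intro x hx
    by_contra h
    exact hx (if_neg h)
  -- transfer summability and tsum from u to U
  have habsU : Summable (fun x : (ℕ × ℕ) × ℕ => Complex.abs (UF c z w x)) := by
    have key : ∀ a : ℝ, HasSum (fun y : ℕ × ℕ × ℕ => Complex.abs (uF c z w y)) a ↔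
        HasSum (fun x : (ℕ × ℕ) × ℕ => Complex.abs (UF c z w x)) a := by
      intro a
      refine hasSum_iff_hasSum_of_ne_zero_bij (fun x => IF x.1) ?_ ?_ ?_
      · rintro ⟨x, hx⟩ ⟨y, hy⟩ h
        have hx' : UF c z w x ≠ 0 := fun h0 => hx (by simp [Function.mem_support, h0] at hx ⊢)
        have hy' : UF c z w y ≠ 0 := fun h0 => hy (by simp [Function.mem_support, h0] at hy ⊢)
        exact Subtype.ext (IF_inj x y (hUsupp x hx') (hUsupp y hy') h)
      · intro y hy
        have hy' : uF c z w y ≠ 0 := by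
          intro h0
          simp [Function.mem_support, h0] at hy
        obtain ⟨x, hle, hIx, hUx⟩ := IF_surj c z w y
        refine ⟨⟨x, ?_⟩, hIx⟩
        simp only [Function.mem_support]
        rw [hUx]
        simpa using hy'
      · rintro ⟨x, hx⟩
        have hx' : UF c z w x ≠ 0 := fun h0 => hx (by simp [Function.mem_support, h0] at hx ⊢)
        exact congrArg Complex.abs (IF_val c z w x (hUsupp x hx'))
    obtain ⟨L, hL⟩ := hu_abs
    exact ⟨L, (key L).mp hL⟩
  have hUsum : Summable (UF c z w) :=
    Summable.of_norm (by simpa only [Complex.norm_eq_abs] using habsU)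
  have htsumU : ∑' x : ℕ × ℕ × ℕ, uF c z w x = ∑' x : (ℕ × ℕ) × ℕ, UF c z w x := by
    refine tsum_eq_tsum_of_ne_zero_bij (fun x => IF x.1) ?_ ?_ ?_
    · rintro ⟨x, hx⟩ ⟨y, hy⟩ h
      exact Subtype.ext (IF_inj x y (hUsupp x hx) (hUsupp y hy) h)
    · intro y hy
      obtain ⟨x, hle, hIx, hUx⟩ := IF_surj c z w y
      refine ⟨⟨x, ?_⟩, hIx⟩
      simp only [Function.mem_support]
      rw [hUx]
      exact hy
    · rintro ⟨x, hx⟩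
      exact IF_val c z w x (hUsupp x hx)
  -- diagonal
  have hdiag : Function.Injective (fun m : ℕ => ((m, m) : ℕ × ℕ)) := by
    intro a b h
    simpa using congrArg Prod.fst h
  have hDeq : DF z w = Function.extend (fun m : ℕ => ((m, m) : ℕ × ℕ))
      (fun m => (z * conj w) ^ m) 0 := by
    funext mn
    obtain ⟨m, n⟩ := mn
    by_cases h : m = n
    · subst h
      rw [hdiag.extend_apply]
      simp [DF]
    · rw [Function.extend_apply']
      · simp [DF, h]
      · rintro ⟨a, ha⟩
        simp only [Prod.mk.injEq] at ha
        exact h (ha.1.symm ▸ ha.2.symm ▸ rfl)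
  have hDhas : HasSum (DF z w) ((1 - z * conj w)⁻¹) := by
    rw [hDeq]
    exact (hasSum_extend_zero hdiag).mpr (hasSum_geometric_of_norm_lt_one hAnorm)
  have habsD : Summable (fun mn : ℕ × ℕ => Complex.abs (DF z w mn)) := by
    have : (fun mn : ℕ × ℕ => Complex.abs (DF z w mn))
        = Function.extend (fun m : ℕ => ((m, m) : ℕ × ℕ))
          (fun m => (Complex.abs z * Complex.abs w) ^ m) 0 := by
      funext mn
      obtain ⟨m, n⟩ := mn
      by_cases h : m = n
      · subst h
        rw [hdiag.extend_apply]
        simp [DF, map_pow, map_mul, Complex.abs_conj]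
      · rw [Function.extend_apply']
        · simp [DF, h]
        · rintro ⟨a, ha⟩
          simp only [Prod.mk.injEq] at ha
          exact h (ha.1.symm ▸ ha.2.symm ▸ rfl)
    rw [this]
    exact (summable_extend_zero hdiag).mpr hS3
  -- inner sums
  have hT_inner : ∀ mn : ℕ × ℕ, ∑' p : ℕ, UF c z w (mn, p)
      = ∑ p ∈ Finset.range (min mn.1 mn.2 + 1),
          conj (c (mn.1 - min mn.1 mn.2 + p)) * c (mn.2 - min mn.1 mn.2 + p)
            * z ^ mn.2 * conj w ^ mn.1 := by
    rintro ⟨m, n⟩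
    have h0 : ∀ p ∉ Finset.range (min m n + 1), UF c z w ((m, n), p) = 0 := by
      intro p hp
      simp only [Finset.mem_range] at hp
      simp only [UF]
      exact if_neg (by omega)
    rw [tsum_eq_sum h0]
    refine Finset.sum_congr rfl fun p hp => ?_
    simp only [Finset.mem_range] at hp
    simp only [UF]
    rw [if_pos (by simp only; omega : ((m, n), p).2 ≤ min ((m, n), p).1.1 ((m, n), p).1.2)]
  have hG_eq : ∀ mn : ℕ × ℕ, g mn.1 mn.2 * z ^ mn.2 * conj w ^ mn.1
      = DF z w mn + ∑' p : ℕ, UF c z w (mn, p) := by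
    rintro ⟨m, n⟩
    rw [hT_inner ⟨m, n⟩, hg m n]
    by_cases h : n ≤ m
    · have hmin : min m n = n := min_eq_right h
      rw [if_pos h]
      simp only [hmin, Nat.sub_self, Nat.zero_add]
      rw [add_mul, add_mul, Finset.sum_mul, Finset.sum_mul]
      congr 1
      · simp only [DF]
        by_cases hmn : m = n
        · subst hmn
          simp [mul_pow]
        · simp [hmn]
    · have hm : m < n := Nat.lt_of_not_le h
      have hmin : min m n = m := min_eq_left hm.le
      rw [if_neg h]
      simp only [hmin, Nat.sub_self, Nat.zero_add]
      have hD0 : DF z w (m, n) = 0 := if_neg (by omega)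
      rw [hD0, zero_add, Finset.sum_mul, Finset.sum_mul]
  -- summability of |G|
  have hTabs : Summable (fun mn : ℕ × ℕ => ∑' p : ℕ, Complex.abs (UF c z w (mn, p))) :=
    habsU.prod
  have habsG : Summable (fun mn : ℕ × ℕ =>
      Complex.abs (g mn.1 mn.2 * z ^ mn.2 * conj w ^ mn.1)) := by
    refine Summable.of_nonneg_of_le (fun mn => Complex.abs.nonneg _)
      (fun mn => ?_) (habsD.add hTabs)
    rw [hG_eq mn]
    calc Complex.abs (DF z w mn + ∑' p : ℕ, UF c z w (mn, p))
        ≤ Complex.abs (DF z w mn) + Complex.abs (∑' p : ℕ, UF c z w (mn, p)) :=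
          Complex.abs.add_le _ _
      _ ≤ Complex.abs (DF z w mn) + ∑' p : ℕ, Complex.abs (UF c z w (mn, p)) := by
          refine add_le_add (le_refl _) ?_
          simpa only [Complex.norm_eq_abs] using
            norm_tsum_le_tsum_norm (f := fun p => UF c z w (mn, p))
              (by simpa only [Complex.norm_eq_abs] using habsU.prod_factor mn)
  refine ⟨habsG, ?_⟩
  -- the value
  have hAne : (1 : ℂ) - z * conj w ≠ 0 := by
    intro h
    have : z * conj w = 1 := by linear_combination -h
    rw [this] at hAnorm
    simp at hAnorm
  have hTsummable : Summable (fun mn : ℕ × ℕ => ∑' p : ℕ, UF c z w (mn, p)) := hUsum.prod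
  calc ∑' mn : ℕ × ℕ, g mn.1 mn.2 * z ^ mn.2 * conj w ^ mn.1
      = ∑' mn : ℕ × ℕ, (DF z w mn + ∑' p : ℕ, UF c z w (mn, p)) := tsum_congr hG_eq
    _ = (∑' mn : ℕ × ℕ, DF z w mn) + ∑' mn : ℕ × ℕ, ∑' p : ℕ, UF c z w (mn, p) :=
        Summable.tsum_add hDhas.summable hTsummable
    _ = (1 - z * conj w)⁻¹ + ∑' x : (ℕ × ℕ) × ℕ, UF c z w x := by
        rw [hDhas.tsum_eq, ← Summable.tsum_prod hUsum]
    _ = (1 - z * conj w)⁻¹ + (1 - z * conj w)⁻¹ * (conj (φ w) * φ z) := by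
        rw [← htsumU, htsum_u]
    _ = (1 + φ z * conj (φ w)) / (1 - z * conj w) := by
        field_simp
end
end

section
/- Let k ≥ 1 be an integer, let c_1,…,c_k be positive real numbers, and let ζ_1,…,ζ_k be distinct complex numbers with |ζ_j| = 1. Then there exist a real number γ > 0 and complex numbers α_1,…,α_k with |α_j| > 1 such that for every z ∈ ℂ with |z| = 1 one has ∏_{j=1}^k |z−ζ_j|² + Σ_{j=1}^k c_j·∏_{1≤l≤k, l≠j} |z−ζ_l|² = γ·∏_{j=1}^k |z−α_j|². Moreover, γ and the numbers α_1,…,α_k are unique up to a permutation of the α_j's: if γ' > 0 and α_1',…,α_k' with |α_j'| > 1 also satisfy this identity, then γ' = γ and (α_1',…,α_k') is a permutation of (α_1,…,α_k). -/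
open Complex Polynomial Finset

noncomputable section

/-! ### Auxiliary lemmas -/

lemma circle_infinite : {z : ℂ | ‖z‖ = 1}.Infinite := by
  refine Set.infinite_of_injective_forall_mem
    (f := fun n : ℕ => (⟨((1:ℝ) - n^2)/(1+n^2), 2*n/(1+n^2)⟩ : ℂ)) ?_ ?_
  · intro n m h
    have h1 : ((1:ℝ) - n^2)/(1+n^2) = ((1:ℝ) - m^2)/(1+m^2) := congrArg Complex.re h
    have hn : (0:ℝ) < 1 + (n:ℝ)^2 := by positivity
    have hm : (0:ℝ) < 1 + (m:ℝ)^2 := by positivity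
    field_simp at h1
    have h2 : (n:ℝ)^2 = (m:ℝ)^2 := by nlinarith
    have : (n:ℝ) = m := by
      nlinarith [Nat.cast_nonneg (α := ℝ) n, Nat.cast_nonneg (α := ℝ) m]
    exact_mod_cast this
  · intro n
    simp only [Set.mem_setOf_eq]
    have hn : (0:ℝ) < 1 + (n:ℝ)^2 := by positivity
    rw [Complex.norm_def, Complex.normSq_mk]
    rw [show (((1:ℝ) - n^2)/(1+n^2)) * (((1:ℝ) - n^2)/(1+n^2)) + (2*n/(1+n^2)) * (2*n/(1+n^2)) = 1 by
      field_simp; ring]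
    exact Real.sqrt_one

lemma poly_eq_of_circle (p q : Polynomial ℂ)
    (h : ∀ z : ℂ, ‖z‖ = 1 → p.eval z = q.eval z) : p = q :=
  Polynomial.eq_of_infinite_eval_eq p q (circle_infinite.mono (fun z hz => h z hz))

lemma exists_comp_perm_of_multiset_eq {α : Type*} : ∀ {n : ℕ} {f g : Fin n → α},
    Multiset.map f Finset.univ.val = Multiset.map g Finset.univ.val →
    ∃ σ : Equiv.Perm (Fin n), ∀ j, f j = g (σ j) := by
  intro n
  induction n with
  | zero => intro f g _; exact ⟨1, fun j => j.elim0⟩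
  | succ n ih =>
    intro f g h
    have h0 : f 0 ∈ Multiset.map g Finset.univ.val := by
      rw [← h]; exact Multiset.mem_map_of_mem f (Finset.mem_univ_val 0)
    obtain ⟨i, -, hi⟩ := Multiset.mem_map.1 h0
    have hL : Multiset.map f Finset.univ.val
        = f 0 ::ₘ Multiset.map (f ∘ Fin.succ) Finset.univ.val := by
      rw [Fin.univ_succ]
      simp only [Finset.cons_val, Multiset.map_cons, Finset.map_val, Multiset.map_map]
      rfl
    have hR : Multiset.map g Finset.univ.val
        = g i ::ₘ Multiset.map (g ∘ i.succAbove) Finset.univ.val := by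
      rw [Fin.univ_succAbove _ i]
      simp only [Finset.cons_val, Multiset.map_cons, Finset.map_val, Multiset.map_map]
      rfl
    rw [hL, hR, hi] at h
    have h' := (Multiset.cons_inj_right (f 0)).1 h
    obtain ⟨σ', hσ'⟩ := ih h'
    refine ⟨(finSuccEquiv n).trans ((Equiv.optionCongr σ').trans (finSuccEquiv' i).symm), ?_⟩
    intro j
    induction j using Fin.cases with
    | zero => simpa [hi] using rfl
    | succ j => simpa using hσ' j

lemma conj_eq_inv {z : ℂ} (hz : ‖z‖ = 1) : (starRingEnd ℂ) z = z⁻¹ := by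
  have hz0 : z ≠ 0 := by intro h; rw [h] at hz; simp at hz
  field_simp
  rw [mul_comm, Complex.mul_conj, ← Complex.sq_norm, hz]
  norm_num

lemma abs_sq_factor {z α : ℂ} (hz : ‖z‖ = 1) (hα : α ≠ 0) :
    ((‖z - α‖)^2 : ℂ) =
      -(starRingEnd ℂ α) * z⁻¹ * ((z - α) * (z - ((starRingEnd ℂ α))⁻¹)) := by
  have hz0 : z ≠ 0 := by intro h; rw [h] at hz; simp at hz
  have hα' : (starRingEnd ℂ) α ≠ 0 := by simpa using hα
  have : ((‖z - α‖)^2 : ℂ) = (z - α) * (starRingEnd ℂ) (z - α) := by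
    rw [show (z-α) * (starRingEnd ℂ) (z-α) = _ from Complex.mul_conj _, ← Complex.sq_norm]
    push_cast; ring
  rw [this, map_sub, conj_eq_inv hz]
  field_simp
  ring

lemma abs_sq_factor_unit {z ζ : ℂ} (hz : ‖z‖ = 1) (hζ : ‖ζ‖ = 1) :
    ((‖z - ζ‖)^2 : ℂ) = -ζ⁻¹ * z⁻¹ * (z - ζ)^2 := by
  have hζ0 : ζ ≠ 0 := by intro h; rw [h] at hζ; simp at hζ
  rw [abs_sq_factor hz hζ0, conj_eq_inv hζ, inv_inv]
  ring

lemma prod_abs_sq {k : ℕ} (α : Fin k → ℂ) (hα0 : ∀ j, α j ≠ 0) {z : ℂ}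
    (hz : ‖z‖ = 1) :
    ((∏ j, ‖z - α j‖^2 : ℝ) : ℂ)
    = (∏ j, -((starRingEnd ℂ) (α j))) * (z⁻¹)^k *
      ∏ j, ((z - α j) * (z - ((starRingEnd ℂ) (α j))⁻¹)) := by
  push_cast
  rw [Finset.prod_congr rfl (fun j _ => abs_sq_factor hz (hα0 j))]
  rw [Finset.prod_mul_distrib, Finset.prod_mul_distrib, Finset.prod_const, Finset.card_univ,
    Fintype.card_fin]

lemma prod_abs_sq_erase {k : ℕ} (ζ : Fin k → ℂ) (hζ : ∀ j, ‖ζ j‖ = 1) {z : ℂ}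
    (hz : ‖z‖ = 1) (j : Fin k) :
    ((∏ l ∈ Finset.univ.erase j, ‖z - ζ l‖^2 : ℝ) : ℂ)
    = (∏ l ∈ Finset.univ.erase j, -(ζ l)⁻¹) * (z⁻¹)^(k-1) *
      (∏ l ∈ Finset.univ.erase j, (z - ζ l))^2 := by
  push_cast
  rw [Finset.prod_congr rfl (fun l _ => abs_sq_factor_unit hz (hζ l))]
  rw [Finset.prod_mul_distrib, Finset.prod_mul_distrib, Finset.prod_const,
    Finset.card_erase_of_mem (Finset.mem_univ j), Finset.card_univ, Fintype.card_fin,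
    Finset.prod_pow]

lemma prod_abs_sq_unit {k : ℕ} (ζ : Fin k → ℂ) (hζ : ∀ j, ‖ζ j‖ = 1) {z : ℂ}
    (hz : ‖z‖ = 1) :
    ((∏ j, ‖z - ζ j‖^2 : ℝ) : ℂ)
    = (∏ j, -(ζ j)⁻¹) * (z⁻¹)^k * (∏ j, (z - ζ j))^2 := by
  push_cast
  rw [Finset.prod_congr rfl (fun l _ => abs_sq_factor_unit hz (hζ l))]
  rw [Finset.prod_mul_distrib, Finset.prod_mul_distrib, Finset.prod_const, Finset.card_univ,
    Fintype.card_fin, Finset.prod_pow]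

lemma F_bridge {k : ℕ} (hk : 1 ≤ k) (c : Fin k → ℝ) (ζ : Fin k → ℂ)
    (hζ : ∀ j, ‖ζ j‖ = 1) {z : ℂ} (hz : ‖z‖ = 1) :
    (((∏ j, ‖z - ζ j‖ ^ 2) +
        ∑ j, c j * ∏ l ∈ Finset.univ.erase j, ‖z - ζ l‖ ^ 2 : ℝ) : ℂ)
    = (∏ j, -(ζ j)⁻¹) * (z⁻¹)^k *
      ((∏ j, (z - ζ j))^2 -
        ∑ j, (c j : ℂ) * (ζ j) * z * (∏ l ∈ Finset.univ.erase j, (z - ζ l))^2) := by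
  have hz0 : z ≠ 0 := by intro h; rw [h] at hz; simp at hz
  have hζ0 : ∀ j, ζ j ≠ 0 := fun j h => by have := hζ j; rw [h] at this; simp at this
  rw [Complex.ofReal_add, prod_abs_sq_unit ζ hζ hz, Complex.ofReal_sum]
  rw [Finset.sum_congr rfl (fun j _ => by
    rw [Complex.ofReal_mul, prod_abs_sq_erase ζ hζ hz j])]
  rw [mul_sub, Finset.mul_sum, sub_eq_add_neg, ← Finset.sum_neg_distrib]
  congr 1
  refine Finset.sum_congr rfl (fun j _ => ?_)
  rw [← Finset.mul_prod_erase Finset.univ (fun l => -(ζ l)⁻¹) (Finset.mem_univ j)]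
  have hkpow : (z⁻¹)^k = (z⁻¹)^(k-1) * z⁻¹ := by
    conv_lhs => rw [show k = (k-1)+1 from (Nat.succ_pred_eq_of_pos hk).symm]
    rw [pow_succ]
  rw [hkpow]
  have hprod : (∏ x ∈ Finset.univ.erase j, ζ x) ≠ 0 :=
    Finset.prod_ne_zero_iff.2 (fun i _ => hζ0 i)
  field_simp [hprod]
  rw [mul_div_assoc, div_self (hζ0 j), mul_one]

/-! ### The polynomial `Q` -/

noncomputable def Qpoly {k : ℕ} (c : Fin k → ℝ) (ζ : Fin k → ℂ) : Polynomial ℂ :=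
  (∏ j, (X - C (ζ j)))^2 -
    ∑ j, C ((c j : ℂ) * ζ j) * X * (∏ l ∈ Finset.univ.erase j, (X - C (ζ l)))^2

lemma Qpoly_eval {k : ℕ} (c : Fin k → ℝ) (ζ : Fin k → ℂ) (z : ℂ) :
    (Qpoly c ζ).eval z = (∏ j, (z - ζ j))^2 -
      ∑ j, (c j : ℂ) * ζ j * z * (∏ l ∈ Finset.univ.erase j, (z - ζ l))^2 := by
  simp [Qpoly, eval_prod, eval_finset_sum, mul_assoc]

lemma Qpoly_monic {k : ℕ} (hk : 1 ≤ k) (c : Fin k → ℝ) (ζ : Fin k → ℂ) :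
    (Qpoly c ζ).Monic ∧ (Qpoly c ζ).degree = ((2*k : ℕ) : WithBot ℕ) := by
  have hP : (∏ j : Fin k, (X - C (ζ j))).Monic :=
    monic_prod_of_monic _ _ (fun j _ => monic_X_sub_C _)
  have hPnd : (∏ j : Fin k, (X - C (ζ j))).natDegree = k := by
    rw [natDegree_prod _ _ (fun j _ => X_sub_C_ne_zero _)]
    simp [natDegree_X_sub_C]
  have hP2 : ((∏ j : Fin k, (X - C (ζ j)))^2).Monic := hP.pow 2
  have hP2deg : ((∏ j : Fin k, (X - C (ζ j)))^2).degree = ((2*k : ℕ) : WithBot ℕ) := by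
    rw [degree_eq_natDegree hP2.ne_zero, natDegree_pow, hPnd]
  have hSdeg : (∑ j, C ((c j : ℂ) * ζ j) * X *
      (∏ l ∈ Finset.univ.erase j, (X - C (ζ l)))^2).degree < ((2*k : ℕ) : WithBot ℕ) := by
    refine lt_of_le_of_lt (degree_sum_le _ _) ?_
    rw [Finset.sup_lt_iff (by exact WithBot.bot_lt_coe _)]
    intro j _
    have hPj : (∏ l ∈ Finset.univ.erase j, (X - C (ζ l))).Monic :=
      monic_prod_of_monic _ _ (fun l _ => monic_X_sub_C _)
    have hPjnd : (∏ l ∈ Finset.univ.erase j, (X - C (ζ l))).natDegree = k - 1 := by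
      rw [natDegree_prod _ _ (fun l _ => X_sub_C_ne_zero _)]
      simp [natDegree_X_sub_C, Finset.card_erase_of_mem]
    have hPj2deg : ((∏ l ∈ Finset.univ.erase j, (X - C (ζ l)))^2).degree
        = ((2*(k-1) : ℕ) : WithBot ℕ) := by
      rw [degree_eq_natDegree (hPj.pow 2).ne_zero, natDegree_pow, hPjnd]
    refine lt_of_le_of_lt (degree_mul_le _ _) ?_
    rw [hPj2deg]
    refine lt_of_le_of_lt (add_le_add (degree_C_mul_X_le _) le_rfl) ?_
    rw [show ((1 : WithBot ℕ) + (2*(k-1) : ℕ)) = ((1 + 2*(k-1) : ℕ) : WithBot ℕ) by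
      push_cast; ring]
    exact_mod_cast (by omega : 1 + 2*(k-1) < 2*k)
  constructor
  · exact hP2.sub_of_left (by rw [hP2deg]; exact hSdeg)
  · rw [Qpoly, degree_sub_eq_left_of_degree_lt (by rw [hP2deg]; exact hSdeg), hP2deg]

lemma Qpoly_eval_zero {k : ℕ} (c : Fin k → ℝ) (ζ : Fin k → ℂ) (hζ0 : ∀ j, ζ j ≠ 0) :
    (Qpoly c ζ).eval 0 ≠ 0 := by
  rw [Qpoly_eval]
  simp only [mul_zero, zero_mul, Finset.sum_const_zero, sub_zero]
  exact pow_ne_zero _ (Finset.prod_ne_zero_iff.2 (fun j _ => by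
    rw [zero_sub]; exact neg_ne_zero.2 (hζ0 j)))

lemma F_pos {k : ℕ} (c : Fin k → ℝ) (hc : ∀ j, 0 < c j) (ζ : Fin k → ℂ)
    (hζdist : Function.Injective ζ) (z : ℂ) :
    0 < (∏ j, ‖z - ζ j‖ ^ 2) +
      ∑ j, c j * ∏ l ∈ Finset.univ.erase j, ‖z - ζ l‖ ^ 2 := by
  by_cases hex : ∃ j, z = ζ j
  · obtain ⟨j, rfl⟩ := hex
    refine add_pos_of_nonneg_of_pos (by positivity) ?_
    refine Finset.sum_pos' (fun i _ => mul_nonneg (hc i).le (by positivity))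
      ⟨j, Finset.mem_univ j, ?_⟩
    refine mul_pos (hc j) (Finset.prod_pos (fun l hl => ?_))
    have hne : ζ j - ζ l ≠ 0 := by
      rw [sub_ne_zero]
      exact fun h => (Finset.mem_erase.1 hl).1 (hζdist h.symm)
    exact pow_pos (norm_pos_iff.2 hne) 2
  · push_neg at hex
    refine add_pos_of_pos_of_nonneg (Finset.prod_pos (fun j _ => ?_))
      (Finset.sum_nonneg (fun i _ => mul_nonneg (hc i).le (by positivity)))
    exact pow_pos (norm_pos_iff.2 (sub_ne_zero.2 (hex j))) 2

theorem fejer_riesz_outer_factorization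
    (k : ℕ) (hk : 1 ≤ k)
    (c : Fin k → ℝ) (hc : ∀ j, 0 < c j)
    (ζ : Fin k → ℂ) (hζdist : Function.Injective ζ)
    (hζ : ∀ j, ‖ζ j‖ = 1) :
    ∃ (γ : ℝ) (α : Fin k → ℂ), 0 < γ ∧ (∀ j, 1 < ‖α j‖) ∧
      (∀ z : ℂ, ‖z‖ = 1 →
        (∏ j, ‖z - ζ j‖ ^ 2) +
          ∑ j, c j * ∏ l ∈ Finset.univ.erase j, ‖z - ζ l‖ ^ 2 =
        γ * ∏ j, ‖z - α j‖ ^ 2) ∧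
      (∀ (γ' : ℝ) (α' : Fin k → ℂ), 0 < γ' → (∀ j, 1 < ‖α' j‖) →
        (∀ z : ℂ, ‖z‖ = 1 →
          (∏ j, ‖z - ζ j‖ ^ 2) +
            ∑ j, c j * ∏ l ∈ Finset.univ.erase j, ‖z - ζ l‖ ^ 2 =
          γ' * ∏ j, ‖z - α' j‖ ^ 2) →
        γ' = γ ∧ ∃ σ : Equiv.Perm (Fin k), ∀ j, α' j = α (σ j)) := by
  classical
  have hζ0 : ∀ j, ζ j ≠ 0 := fun j h => by have := hζ j; rw [h] at this; simp at this
  set Fv : ℂ → ℝ := fun z => (∏ j, ‖z - ζ j‖ ^ 2) +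
      ∑ j, c j * ∏ l ∈ Finset.univ.erase j, ‖z - ζ l‖ ^ 2 with hFv
  set w : ℂ := ∏ j, -(ζ j)⁻¹ with hwdef
  set Q : Polynomial ℂ := Qpoly c ζ with hQdef
  obtain ⟨hQmonic, hQdeg⟩ := Qpoly_monic hk c ζ
  have hQnd : Q.natDegree = 2*k := natDegree_eq_of_degree_eq_some hQdeg
  have hsplits : Splits Q := IsAlgClosed.splits Q
  set M : Multiset ℂ := Q.roots with hMdef
  have hMcard : Multiset.card M = 2*k := by
    rw [hMdef, ← hQnd]; exact (splits_iff_card_roots).1 hsplits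
  have hQfact : Q = (M.map (fun a => X - C a)).prod :=
    hsplits.eq_prod_roots_of_monic hQmonic
  have hQev : ∀ z : ℂ, Q.eval z = (M.map (fun a => z - a)).prod := by
    intro z
    conv_lhs => rw [hQfact]
    rw [eval_multiset_prod, Multiset.map_map]
    simp [Function.comp_def]
  have hM0 : ∀ β ∈ M, β ≠ 0 := by
    intro β hβ h0
    apply Qpoly_eval_zero c ζ hζ0
    have := isRoot_of_mem_roots (p := Q) (by rw [← hMdef]; exact hβ)
    rw [h0] at this
    exact this
  have hbridge : ∀ z : ℂ, ‖z‖ = 1 →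
      ((Fv z : ℝ) : ℂ) = w * (z⁻¹)^k * Q.eval z := by
    intro z hz
    rw [hFv, hQdef, Qpoly_eval]
    exact F_bridge hk c ζ hζ hz
  have hFpos : ∀ z : ℂ, 0 < Fv z := fun z => F_pos c hc ζ hζdist z
  have hMcirc : ∀ β ∈ M, ‖β‖ ≠ 1 := by
    intro β hβ hab
    have hev : Q.eval β = 0 := isRoot_of_mem_roots (by rw [← hMdef]; exact hβ)
    have hb := hbridge β hab
    rw [hev, mul_zero] at hb
    exact absurd (Complex.ofReal_eq_zero.1 hb) (ne_of_gt (hFpos β))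
  have hw_abs : ‖w‖ = 1 := by
    rw [hwdef, norm_prod]
    refine Finset.prod_eq_one (fun j _ => ?_)
    rw [norm_neg, norm_inv, hζ j, inv_one]
  have hw0 : w ≠ 0 := fun h => by rw [h] at hw_abs; simp at hw_abs
  have hw_conj : (starRingEnd ℂ) w = w⁻¹ := conj_eq_inv hw_abs
  -- the conjugate-reciprocal symmetry of Q
  set B : ℂ := (M.map (fun a => -(starRingEnd ℂ) a)).prod with hBdef
  set Q₂ : Polynomial ℂ := ((M.map (fun β => ((starRingEnd ℂ) β)⁻¹)).map
      (fun a => X - C a)).prod with hQ₂def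
  have hQ₂ev : ∀ z : ℂ, Q₂.eval z
      = (M.map (fun a => z - ((starRingEnd ℂ) a)⁻¹)).prod := by
    intro z
    rw [hQ₂def, eval_multiset_prod, Multiset.map_map, Multiset.map_map]
    simp [Function.comp_def]
  have hconjQ : ∀ z : ℂ, ‖z‖ = 1 →
      (starRingEnd ℂ) (Q.eval z) = B * (z⁻¹)^(2*k) * Q₂.eval z := by
    intro z hz
    have hz0 : z ≠ 0 := fun h => by rw [h] at hz; simp at hz
    rw [hQev, map_multiset_prod, Multiset.map_map]
    have hstep : ∀ a ∈ M, ((starRingEnd ℂ) ∘ fun a => z - a) a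
        = (fun a => (-(starRingEnd ℂ) a) * z⁻¹ * (z - ((starRingEnd ℂ) a)⁻¹)) a := by
      intro a ha
      have ha0 : (starRingEnd ℂ) a ≠ 0 := by simpa using hM0 a ha
      simp only [Function.comp_apply, map_sub, conj_eq_inv hz]
      field_simp
      ring
    rw [Multiset.map_congr rfl hstep]
    rw [show (fun a : ℂ => (-(starRingEnd ℂ) a) * z⁻¹ * (z - ((starRingEnd ℂ) a)⁻¹))
        = fun a : ℂ => ((-(starRingEnd ℂ) a) * z⁻¹) * (z - ((starRingEnd ℂ) a)⁻¹) from rfl]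
    rw [Multiset.prod_map_mul, Multiset.prod_map_mul, hQ₂ev z, hBdef]
    have : (Multiset.map (fun _ : ℂ => z⁻¹) M).prod = (z⁻¹)^(2*k) := by
      rw [Multiset.map_const', Multiset.prod_replicate, hMcard]
    rw [this]
  have hQ₂monic : Q₂.Monic :=
    monic_multiset_prod_of_monic _ _ (fun a _ => monic_X_sub_C a)
  have hcirc2 : ∀ z : ℂ, ‖z‖ = 1 →
      Q.eval z = (((starRingEnd ℂ) w)^2 * B) * Q₂.eval z := by
    intro z hz
    have hz0 : z ≠ 0 := fun h => by rw [h] at hz; simp at hz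
    have hreal : (starRingEnd ℂ) (w * (z⁻¹)^k * Q.eval z) = w * (z⁻¹)^k * Q.eval z := by
      rw [← hbridge z hz, Complex.conj_ofReal]
    rw [map_mul, map_mul, hconjQ z hz, map_pow, map_inv₀, conj_eq_inv hz, inv_inv] at hreal
    -- hreal : conj w * z^k * (B * (z⁻¹)^(2k) * Q₂.eval z) = w * (z⁻¹)^k * Q.eval z
    have hzk : (z:ℂ)^k * (z⁻¹)^(2*k) = (z⁻¹)^k := by
      rw [two_mul, pow_add, ← mul_assoc, ← mul_pow, mul_inv_cancel₀ hz0, one_pow, one_mul]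
    have h2 : (starRingEnd ℂ) w * ((z⁻¹)^k * (B * Q₂.eval z)) = w * ((z⁻¹)^k * Q.eval z) := by
      calc (starRingEnd ℂ) w * ((z⁻¹)^k * (B * Q₂.eval z))
          = (starRingEnd ℂ) w * z^k * (B * (z⁻¹)^(2*k) * Q₂.eval z) := by
            rw [← hzk]; ring
        _ = w * (z⁻¹)^k * Q.eval z := hreal
        _ = w * ((z⁻¹)^k * Q.eval z) := by ring
    refine mul_left_cancel₀ (pow_ne_zero k (inv_ne_zero hz0)) ?_
    have hw' : w⁻¹ * ((starRingEnd ℂ) w) = ((starRingEnd ℂ) w)^2 := by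
      rw [← hw_conj]; ring
    calc (z⁻¹)^k * Q.eval z
        = w⁻¹ * (w * ((z⁻¹)^k * Q.eval z)) := by
          field_simp
      _ = w⁻¹ * ((starRingEnd ℂ) w * ((z⁻¹)^k * (B * Q₂.eval z))) := by rw [h2]
      _ = (z⁻¹)^k * ((((starRingEnd ℂ) w)^2 * B) * Q₂.eval z) := by
          rw [← mul_assoc, hw']; ring
  have hpoly : Q = C (((starRingEnd ℂ) w)^2 * B) * Q₂ := by
    refine poly_eq_of_circle _ _ (fun z hz => ?_)
    rw [eval_mul, eval_C]
    exact hcirc2 z hz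
  have hu1 : ((starRingEnd ℂ) w)^2 * B = 1 := by
    have := congrArg leadingCoeff hpoly
    rw [hQmonic.leadingCoeff, leadingCoeff_mul, leadingCoeff_C, hQ₂monic.leadingCoeff,
      mul_one] at this
    exact this.symm
  have hQ2eq : Q = Q₂ := by rw [hpoly, hu1, map_one, one_mul]
  have hsym : M.map (fun β => ((starRingEnd ℂ) β)⁻¹) = M := by
    have := roots_multiset_prod_X_sub_C (M.map (fun β => ((starRingEnd ℂ) β)⁻¹))
    rw [← hQ₂def, ← hQ2eq, ← hMdef] at this
    exact this.symm
  -- split the roots into those outside and inside the unit disc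
  set Mout : Multiset ℂ := M.filter (fun β => 1 < ‖β‖) with hMoutdef
  have hMin_eq : M.filter (fun β => ¬ 1 < ‖β‖)
      = Mout.map (fun β => ((starRingEnd ℂ) β)⁻¹) := by
    conv_lhs => rw [← hsym]
    rw [Multiset.filter_map, hMoutdef]
    congr 1
    refine Multiset.filter_congr (fun β hβ => ?_)
    have h0 := hM0 β hβ
    have h1 := hMcirc β hβ
    have hpos : 0 < ‖β‖ := norm_pos_iff.2 h0
    have habsι : ‖((starRingEnd ℂ) β)⁻¹‖ = (‖β‖)⁻¹ := by
      rw [norm_inv, Complex.norm_conj]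
    show ¬ 1 < ‖((starRingEnd ℂ) β)⁻¹‖ ↔ 1 < ‖β‖
    rw [habsι, not_lt]
    have hinv : (‖β‖)⁻¹ * ‖β‖ = 1 := inv_mul_cancel₀ (ne_of_gt hpos)
    constructor
    · intro hle
      have h2 : 1 ≤ ‖β‖ := by nlinarith
      exact lt_of_le_of_ne h2 (Ne.symm h1)
    · intro hlt
      nlinarith
  have hMsplit : Mout + Mout.map (fun β => ((starRingEnd ℂ) β)⁻¹) = M := by
    rw [← hMin_eq, hMoutdef]
    exact Multiset.filter_add_not _ M
  have hcard_out : Multiset.card Mout = k := by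
    have hc2 := congrArg Multiset.card hMsplit
    rw [Multiset.card_add, Multiset.card_map, hMcard] at hc2
    omega
  -- enumerate the outside roots
  have hlen : Mout.toList.length = k := by rw [Multiset.length_toList, hcard_out]
  set α : Fin k → ℂ := fun j => Mout.toList.get (Fin.cast hlen.symm j) with hαdef
  have hαmap : Multiset.map α Finset.univ.val = Mout := by
    rw [Fin.univ_val_map]
    have hof : List.ofFn α = Mout.toList := by
      refine List.ext_getElem (by simp [hlen]) (fun i h1 h2 => ?_)
      simp [hαdef, List.getElem_ofFn]
    rw [hof, Multiset.coe_toList]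
  have hαmem : ∀ j, α j ∈ Mout := by
    intro j
    have : α j ∈ Mout.toList := by
      rw [hαdef]
      exact List.get_mem _ _
    exact Multiset.mem_toList.1 this
  have hαout : ∀ j, 1 < ‖α j‖ := by
    intro j
    have h := hαmem j
    rw [hMoutdef] at h
    exact (Multiset.mem_filter.1 h).2
  have hαM : ∀ j, α j ∈ M := by
    intro j
    have h := hαmem j
    rw [hMoutdef] at h
    exact (Multiset.mem_filter.1 h).1
  have hα0 : ∀ j, α j ≠ 0 := fun j => hM0 _ (hαM j)
  have hprodz : ∀ z : ℂ,
      (∏ j, ((z - α j) * (z - ((starRingEnd ℂ) (α j))⁻¹))) = Q.eval z := by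
    intro z
    have h1 : (∏ j, ((z - α j) * (z - ((starRingEnd ℂ) (α j))⁻¹)))
        = (Mout.map (fun β => (z - β) * (z - ((starRingEnd ℂ) β)⁻¹))).prod := by
      rw [← hαmap, Multiset.map_map]; rfl
    rw [h1, Multiset.prod_map_mul, hQev]
    conv_rhs => rw [← hMsplit]
    rw [Multiset.map_add, Multiset.prod_add, Multiset.map_map]
    rfl
  have hAeq : (∏ j, -((starRingEnd ℂ) (α j)))
      = (Mout.map (fun β => -(starRingEnd ℂ) β)).prod := by
    rw [← hαmap, Multiset.map_map]; rfl
  have hA0 : (∏ j, -((starRingEnd ℂ) (α j))) ≠ 0 :=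
    Finset.prod_ne_zero_iff.2 (fun j _ => neg_ne_zero.2 (by simpa using hα0 j))
  have hGz : ∀ z : ℂ, ‖z‖ = 1 → ((∏ j, ‖z - α j‖^2 : ℝ) : ℂ)
      = (∏ j, -((starRingEnd ℂ) (α j))) * (z⁻¹)^k * Q.eval z := by
    intro z hz
    rw [prod_abs_sq α hα0 hz, hprodz z]
  -- define γ
  have h1circ : ‖(1:ℂ)‖ = 1 := norm_one
  have hGpos : 0 < ∏ j, ‖(1:ℂ) - α j‖^2 := by
    refine Finset.prod_pos (fun j _ => pow_pos (norm_pos_iff.2 ?_) 2)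
    intro h
    rw [sub_eq_zero] at h
    have := hαout j
    rw [← h] at this
    simp at this
  set γ : ℝ := Fv 1 / ∏ j, ‖(1:ℂ) - α j‖^2 with hγdef
  have hγpos : 0 < γ := div_pos (hFpos 1) hGpos
  have hQ1 : Q.eval 1 ≠ 0 := by
    intro h
    have hb := hbridge 1 h1circ
    rw [h, mul_zero] at hb
    exact (ne_of_gt (hFpos 1)) (Complex.ofReal_eq_zero.1 hb)
  have hγA : (γ:ℂ) * (∏ j, -((starRingEnd ℂ) (α j))) = w := by
    have e1 := hbridge 1 h1circ
    have e2 := hGz 1 h1circ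
    simp only [inv_one, one_pow, mul_one] at e1 e2
    rw [hγdef, Complex.ofReal_div, e1, e2]
    field_simp
  have hmain : ∀ z : ℂ, ‖z‖ = 1 →
      Fv z = γ * ∏ j, ‖z - α j‖^2 := by
    intro z hz
    have hcast : ((Fv z : ℝ):ℂ) = ((γ * ∏ j, ‖z - α j‖^2 : ℝ) : ℂ) := by
      rw [hbridge z hz, Complex.ofReal_mul, hGz z hz, ← hγA]
      ring
    exact_mod_cast hcast
  refine ⟨γ, α, hγpos, hαout, fun z hz => hmain z hz, ?_⟩
  intro γ' α' hγ'pos hα'out hid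
  have hα'0 : ∀ j, α' j ≠ 0 := by
    intro j h
    have := hα'out j
    rw [h] at this
    simp at this
    norm_num at this
  set A' : ℂ := ∏ j, -((starRingEnd ℂ) (α' j)) with hA'def
  set Q' : Polynomial ℂ :=
    ∏ j, ((X - C (α' j)) * (X - C (((starRingEnd ℂ) (α' j))⁻¹))) with hQ'def
  have hQ'ev : ∀ z : ℂ, Q'.eval z
      = ∏ j, ((z - α' j) * (z - ((starRingEnd ℂ) (α' j))⁻¹)) := by
    intro z
    rw [hQ'def]
    simp [eval_prod]
  have hQ'monic : Q'.Monic :=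
    monic_prod_of_monic _ _ (fun j _ => (monic_X_sub_C _).mul (monic_X_sub_C _))
  have hcirc' : ∀ z : ℂ, ‖z‖ = 1 →
      w * Q.eval z = ((γ':ℂ) * A') * Q'.eval z := by
    intro z hz
    have hz0 : z ≠ 0 := fun h => by rw [h] at hz; simp at hz
    have e3 : ((Fv z : ℝ) : ℂ)
        = ((γ' * ∏ j, ‖z - α' j‖^2 : ℝ) : ℂ) := by
      exact_mod_cast congrArg (fun r : ℝ => (r : ℂ)) (hid z hz)
    rw [hbridge z hz, Complex.ofReal_mul, prod_abs_sq α' hα'0 hz] at e3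
    refine mul_left_cancel₀ (pow_ne_zero k (inv_ne_zero hz0)) ?_
    rw [hQ'ev]
    calc (z⁻¹)^k * (w * Q.eval z) = w * (z⁻¹)^k * Q.eval z := by ring
      _ = (γ':ℂ) * ((∏ j, -((starRingEnd ℂ) (α' j))) * (z⁻¹)^k *
            ∏ j, ((z - α' j) * (z - ((starRingEnd ℂ) (α' j))⁻¹))) := e3
      _ = (z⁻¹)^k * (((γ':ℂ) * A') *
            ∏ j, ((z - α' j) * (z - ((starRingEnd ℂ) (α' j))⁻¹))) := by
          rw [hA'def]; ring
  have hpoly' : C w * Q = C ((γ':ℂ) * A') * Q' := by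
    refine poly_eq_of_circle _ _ (fun z hz => ?_)
    rw [eval_mul, eval_mul, eval_C, eval_C]
    exact hcirc' z hz
  have hlead : (γ':ℂ) * A' = w := by
    have hl := congrArg leadingCoeff hpoly'
    rw [leadingCoeff_mul, leadingCoeff_mul, leadingCoeff_C, leadingCoeff_C,
      hQmonic.leadingCoeff, hQ'monic.leadingCoeff, mul_one, mul_one] at hl
    exact hl.symm
  have hQQ' : Q = Q' := by
    rw [hlead] at hpoly'
    exact mul_left_cancel₀ (fun h => hw0 (by simpa using C_eq_zero.1 h)) hpoly'
  have hroots' : M = Multiset.map α' Finset.univ.val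
      + Multiset.map (fun j => ((starRingEnd ℂ) (α' j))⁻¹) Finset.univ.val := by
    rw [hMdef, hQQ', hQ'def, Finset.prod_mul_distrib]
    have hne1 : (∏ j, (X - C (α' j))) ≠ 0 :=
      (monic_prod_of_monic _ _ (fun j _ => monic_X_sub_C _)).ne_zero
    have hne2 : (∏ j, (X - C (((starRingEnd ℂ) (α' j))⁻¹))) ≠ 0 :=
      (monic_prod_of_monic _ _ (fun j _ => monic_X_sub_C _)).ne_zero
    rw [roots_mul (mul_ne_zero hne1 hne2)]
    congr 1
    · have h1 : (∏ j, (X - C (α' j)))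
          = ((Multiset.map α' Finset.univ.val).map (fun a => X - C a)).prod := by
        rw [Multiset.map_map]; rfl
      rw [h1, roots_multiset_prod_X_sub_C]
    · have h2 : (∏ j, (X - C (((starRingEnd ℂ) (α' j))⁻¹)))
          = ((Multiset.map (fun j => ((starRingEnd ℂ) (α' j))⁻¹) Finset.univ.val).map
              (fun a => X - C a)).prod := by
        rw [Multiset.map_map]; rfl
      rw [h2, roots_multiset_prod_X_sub_C]
  have hfilter : Mout = Multiset.map α' Finset.univ.val := by
    rw [hMoutdef, hroots', Multiset.filter_add]
    have hg1 : ∀ a ∈ Multiset.map α' Finset.univ.val, 1 < ‖a‖ := by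
      intro a ha
      obtain ⟨j, -, rfl⟩ := Multiset.mem_map.1 ha
      exact hα'out j
    have hg2 : ∀ a ∈ Multiset.map (fun j => ((starRingEnd ℂ) (α' j))⁻¹) Finset.univ.val,
        ¬ 1 < ‖a‖ := by
      intro a ha
      obtain ⟨j, -, rfl⟩ := Multiset.mem_map.1 ha
      rw [not_lt, norm_inv, Complex.norm_conj]
      have h1 := hα'out j
      have hpos : 0 < ‖α' j‖ := lt_trans one_pos h1
      have hinv : (‖α' j‖)⁻¹ * ‖α' j‖ = 1 :=
        inv_mul_cancel₀ (ne_of_gt hpos)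
      nlinarith
    rw [Multiset.filter_eq_self.2 hg1, Multiset.filter_eq_nil.2 hg2, add_zero]
  have hmaps : Multiset.map α' Finset.univ.val = Multiset.map α Finset.univ.val := by
    rw [← hfilter, hαmap]
  obtain ⟨σ, hσ⟩ := exists_comp_perm_of_multiset_eq hmaps
  refine ⟨?_, σ, hσ⟩
  have hA'A : A' = ∏ j, -((starRingEnd ℂ) (α j)) := by
    rw [hA'def]
    have h1 : (∏ j, -((starRingEnd ℂ) (α' j)))
        = ((Multiset.map α' Finset.univ.val).map (fun β => -(starRingEnd ℂ) β)).prod := by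
      rw [Multiset.map_map]; rfl
    have h2 : (∏ j, -((starRingEnd ℂ) (α j)))
        = ((Multiset.map α Finset.univ.val).map (fun β => -(starRingEnd ℂ) β)).prod := by
      rw [Multiset.map_map]; rfl
    rw [h1, hmaps, h2]
  have hγγ : (γ':ℂ) = (γ:ℂ) := by
    have h1 : (γ':ℂ) * (∏ j, -((starRingEnd ℂ) (α j))) = w := by
      rw [← hA'A]; exact hlead
    exact mul_right_cancel₀ hA0 (h1.trans hγA.symm)
  exact_mod_cast hγγ
end
end
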